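/- arXiv:1707.02251 — 6 statements merged into one kernel-verified Lean document; each statement's English description precedes it below -/
import Mathlib

section
/- Let γ₁, γ₂, γ₃ : [0,1] → ℂ be continuous paths with γ₁(0) = γ₂(0) = γ₃(0) and γ₁(1) = γ₂(1) = γ₃(1), let H₁ be a homotopy from γ₁ to γ₂ and H₂ a homotopy from γ₂ to γ₃. Then for every x ∈ ℂ one has E_{H₁+H₂}(x) ≤ E_{H₁}(x) + E_{H₂}(x) in ℕ∞. -/
open MeasureTheory unitInterval ENNReal

noncomputable section

/-- `homE H p` is the number of connected components of the fiber `H⁻¹({p})`,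
as an extended natural number. -/
def homE {a b : ℂ} {γ₁ γ₂ : Path a b} (H : Path.Homotopy γ₁ γ₂) (p : ℂ) : ℕ∞ :=
  ENat.card (ConnectedComponents ↥(⇑H ⁻¹' {p}))

/-- The homotopy area `Area(H) = ∫⁻ x, E_H(x)`. -/
def homArea {a b : ℂ} {γ₁ γ₂ : Path a b} (H : Path.Homotopy γ₁ γ₂) : ℝ≥0∞ :=
  ∫⁻ p, (homE H p : ℝ≥0∞)

/-- The minimum homotopy area `σ(γ₁, γ₂)`, the infimum of `Area(H)` over all
homotopies rel endpoints from `γ₁` to `γ₂`. -/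
def minHomArea {a b : ℂ} (γ₁ γ₂ : Path a b) : ℝ≥0∞ :=
  ⨅ H : Path.Homotopy γ₁ γ₂, homArea H

/-- For a concatenation of homotopies, the number of sweeps over any point is at most
the sum of the numbers of sweeps of the pieces. -/
theorem stmt_0 {a b : ℂ} (γ₁ γ₂ γ₃ : Path a b)
    (H₁ : Path.Homotopy γ₁ γ₂) (H₂ : Path.Homotopy γ₂ γ₃) (x : ℂ) :
    homE (H₁.trans H₂) x ≤ homE H₁ x + homE H₂ x := by
  classical
  set F : Set (I × I) := ⇑(H₁.trans H₂) ⁻¹' {x} with hF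
  set F₁ : Set (I × I) := ⇑H₁ ⁻¹' {x} with hF₁
  set F₂ : Set (I × I) := ⇑H₂ ⁻¹' {x} with hF₂
  -- the map φ₁ : F₁ → F
  have mem₁ : ∀ p : ↥F₁, ((⟨(p.1.1 : ℝ)/2, by
      constructor <;> nlinarith [p.1.1.2.1, p.1.1.2.2]⟩ : I), p.1.2) ∈ F := by
    rintro ⟨⟨s, t⟩, hp⟩
    have hp' : H₁ (s, t) = x := hp
    simp only [hF, Set.mem_preimage, Set.mem_singleton_iff]
    rw [Path.Homotopy.trans_apply]
    rw [dif_pos (by simp; nlinarith [s.2.2] : ((⟨(s:ℝ)/2, by constructor <;> nlinarith [s.2.1, s.2.2]⟩ : I) : ℝ) ≤ 1/2)]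
    convert hp' using 3
    ext; simp; ring
  have mem₂ : ∀ p : ↥F₂, ((⟨((p.1.1 : ℝ)+1)/2, by
      constructor <;> nlinarith [p.1.1.2.1, p.1.1.2.2]⟩ : I), p.1.2) ∈ F := by
    rintro ⟨⟨s, t⟩, hp⟩
    have hp' : H₂ (s, t) = x := hp
    simp only [hF, Set.mem_preimage, Set.mem_singleton_iff]
    rw [Path.Homotopy.trans_apply]
    split_ifs with h
    · -- then s = 0
      have hs0 : (s : ℝ) = 0 := by simp at h; nlinarith [s.2.1]
      have hs : s = (0 : I) := by ext; exact hs0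
      rw [hs] at hp'
      have hp'' : γ₂ t = x := by simpa using hp'
      have key : H₁ ((1:I), t) = x := by simpa using hp''
      convert key using 3
      ext; simp [hs0]
    · convert hp' using 3
      ext; simp; ring
  set φ₁ : ↥F₁ → ↥F := fun p => ⟨_, mem₁ p⟩ with hφ₁def
  set φ₂ : ↥F₂ → ↥F := fun p => ⟨_, mem₂ p⟩ with hφ₂def
  have hc₁ : Continuous φ₁ := by
    apply Continuous.subtype_mk
    fun_prop
  have hc₂ : Continuous φ₂ := by
    apply Continuous.subtype_mk
    fun_prop
  set g : ConnectedComponents ↥F₁ ⊕ ConnectedComponents ↥F₂ → ConnectedComponents ↥F :=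
    Sum.elim hc₁.connectedComponentsMap hc₂.connectedComponentsMap with hg
  have hsurj : Function.Surjective g := by
    intro c
    obtain ⟨⟨⟨s, t⟩, hp⟩, rfl⟩ := ConnectedComponents.surjective_coe c
    have hp' : (H₁.trans H₂) (s, t) = x := hp
    rw [Path.Homotopy.trans_apply] at hp'
    split_ifs at hp' with h
    · refine ⟨Sum.inl ((⟨_, hp'⟩ : ↥F₁) : ConnectedComponents ↥F₁), ?_⟩
      simp only [hg, Sum.elim_inl, Continuous.connectedComponentsMap,
        Continuous.connectedComponentsLift_apply_coe, Function.comp_apply]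
      congr 1
      apply Subtype.ext
      apply Prod.ext <;> ext <;> simp [hφ₁def]
    · refine ⟨Sum.inr ((⟨_, hp'⟩ : ↥F₂) : ConnectedComponents ↥F₂), ?_⟩
      simp only [hg, Sum.elim_inr, Continuous.connectedComponentsMap,
        Continuous.connectedComponentsLift_apply_coe, Function.comp_apply]
      congr 1
      apply Subtype.ext
      apply Prod.ext <;> ext <;> simp [hφ₂def]
  have key : ENat.card (ConnectedComponents ↥F) ≤
      ENat.card (ConnectedComponents ↥F₁ ⊕ ConnectedComponents ↥F₂) :=
    Cardinal.toENat.monotone' (Cardinal.mk_le_of_surjective hsurj)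
  rw [ENat.card_sum] at key
  exact key
end
end

section
/- Let γ₁, γ₂, γ₃ : [0,1] → ℂ be continuous paths with γ₁(0) = γ₂(0) = γ₃(0) and γ₁(1) = γ₂(1) = γ₃(1), let H₁ be a homotopy from γ₁ to γ₂ and H₂ a homotopy from γ₂ to γ₃. Then for every x ∈ ℂ with x ∉ range γ₂ one has E_{H₁+H₂}(x) = E_{H₁}(x) + E_{H₂}(x) in ℕ∞. -/
open MeasureTheory unitInterval ENNReal

noncomputable section

/-- A homeomorphism induces an equivalence of connected components. -/
def ccCongr {X Y : Type*} [TopologicalSpace X] [TopologicalSpace Y] (h : X ≃ₜ Y) :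
    ConnectedComponents X ≃ ConnectedComponents Y where
  toFun := h.continuous.connectedComponentsMap
  invFun := h.symm.continuous.connectedComponentsMap
  left_inv := by
    intro z
    obtain ⟨p, rfl⟩ := ConnectedComponents.surjective_coe z
    show ((h.symm (h p) : X) : ConnectedComponents X) = p
    rw [h.symm_apply_apply]
  right_inv := by
    intro z
    obtain ⟨p, rfl⟩ := ConnectedComponents.surjective_coe z
    show ((h (h.symm p) : Y) : ConnectedComponents Y) = p
    rw [h.apply_symm_apply]

/-- Connected components of a topological sum. -/
def ccSum (X Y : Type*) [TopologicalSpace X] [TopologicalSpace Y] :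
    ConnectedComponents (X ⊕ Y) ≃ ConnectedComponents X ⊕ ConnectedComponents Y where
  toFun := Continuous.connectedComponentsLift
    ((continuous_inl.comp ConnectedComponents.continuous_coe).sumElim
      (continuous_inr.comp ConnectedComponents.continuous_coe))
  invFun := Sum.elim continuous_inl.connectedComponentsMap continuous_inr.connectedComponentsMap
  left_inv := by
    intro z
    obtain ⟨p, rfl⟩ := ConnectedComponents.surjective_coe z
    cases p <;> rfl
  right_inv := by
    rintro (z | z) <;>
    · obtain ⟨p, rfl⟩ := ConnectedComponents.surjective_coe z
      rfl


section
variable {a b : ℂ} {γ₁ γ₂ γ₃ : Path a b}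

lemma half_mem' (t : I) : (t : ℝ) / 2 ∈ I :=
  ⟨by linarith [t.2.1], by linarith [t.2.2]⟩

lemma half_add_mem' (t : I) : ((t : ℝ) + 1) / 2 ∈ I :=
  ⟨by linarith [t.2.1], by linarith [t.2.2]⟩

lemma fst_pos_of_mem_fiber (H₂ : Path.Homotopy γ₂ γ₃) {x : ℂ} (hx : x ∉ Set.range γ₂)
    {p : I × I} (hp : H₂ p = x) : (0 : ℝ) < p.1 := by
  rcases lt_or_eq_of_le p.1.2.1 with h | h
  · exact h
  · exfalso
    apply hx
    refine ⟨p.2, ?_⟩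
    have hp0 : p = (0, p.2) := by
      ext
      · exact h.symm
      · rfl
    rw [hp0] at hp
    rw [← hp]
    exact (H₂.apply_zero p.2).symm

lemma mem_fiber_inl (H₁ : Path.Homotopy γ₁ γ₂) (H₂ : Path.Homotopy γ₂ γ₃) {x : ℂ}
    {p : I × I} (hp : H₁ p = x) :
    (H₁.trans H₂) (⟨(p.1 : ℝ) / 2, half_mem' p.1⟩, p.2) = x := by
  rw [Path.Homotopy.trans_apply, dif_pos (by show (p.1 : ℝ)/2 ≤ 1/2; linarith [p.1.2.2])]
  convert hp using 2
  ext
  · show 2 * ((p.1 : ℝ) / 2) = p.1; ring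
  · rfl

lemma mem_fiber_inr (H₁ : Path.Homotopy γ₁ γ₂) (H₂ : Path.Homotopy γ₂ γ₃) {x : ℂ}
    (hx : x ∉ Set.range γ₂) {p : I × I} (hp : H₂ p = x) :
    (H₁.trans H₂) (⟨((p.1 : ℝ) + 1) / 2, half_add_mem' p.1⟩, p.2) = x := by
  have h0 := fst_pos_of_mem_fiber H₂ hx hp
  rw [Path.Homotopy.trans_apply,
    dif_neg (by push_neg; show (1:ℝ)/2 < ((p.1:ℝ)+1)/2; linarith)]
  convert hp using 2
  ext
  · show 2 * (((p.1 : ℝ) + 1) / 2) - 1 = p.1; ring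
  · rfl

/-- The fiber of a concatenated homotopy over a point off the middle curve is
equivalent to the sum of the fibers of the pieces. -/
noncomputable def fiberEquiv (H₁ : Path.Homotopy γ₁ γ₂) (H₂ : Path.Homotopy γ₂ γ₃) (x : ℂ)
    (hx : x ∉ Set.range γ₂) :
    (↥(⇑H₁ ⁻¹' {x}) ⊕ ↥(⇑H₂ ⁻¹' {x})) ≃ ↥(⇑(H₁.trans H₂) ⁻¹' {x}) where
  toFun := Sum.elim
    (fun p => ⟨(⟨(p.1.1 : ℝ) / 2, half_mem' p.1.1⟩, p.1.2), mem_fiber_inl H₁ H₂ p.2⟩)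
    (fun p => ⟨(⟨((p.1.1 : ℝ) + 1) / 2, half_add_mem' p.1.1⟩, p.1.2),
      mem_fiber_inr H₁ H₂ hx p.2⟩)
  invFun := fun q =>
    if h : (q.1.1 : ℝ) ≤ 1 / 2 then
      Sum.inl ⟨(⟨2 * q.1.1, (unitInterval.mul_pos_mem_iff zero_lt_two).2 ⟨q.1.1.2.1, h⟩⟩, q.1.2),
        by
        have hq : (H₁.trans H₂) q.1 = x := q.2
        rw [Path.Homotopy.trans_apply, dif_pos h] at hq
        exact hq⟩
    else
      Sum.inr ⟨(⟨2 * q.1.1 - 1,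
          unitInterval.two_mul_sub_one_mem_iff.2 ⟨(not_le.1 h).le, q.1.1.2.2⟩⟩, q.1.2), by
        have hq : (H₁.trans H₂) q.1 = x := q.2
        rw [Path.Homotopy.trans_apply, dif_neg h] at hq
        exact hq⟩
  left_inv := by
    rintro (⟨p, hp⟩ | ⟨p, hp⟩)
    · dsimp only [Sum.elim_inl]
      rw [dif_pos (by show (p.1 : ℝ)/2 ≤ 1/2; linarith [p.1.2.2])]
      congr 1
      ext
      · show 2 * ((p.1 : ℝ) / 2) = p.1; ring
      · rfl
    · have h0 := fst_pos_of_mem_fiber H₂ hx hp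
      dsimp only [Sum.elim_inr]
      rw [dif_neg (by push_neg; show (1:ℝ)/2 < ((p.1:ℝ)+1)/2; linarith)]
      congr 1
      ext
      · show 2 * (((p.1 : ℝ) + 1) / 2) - 1 = p.1; ring
      · rfl
  right_inv := by
    rintro ⟨q, hq⟩
    by_cases h : (q.1 : ℝ) ≤ 1 / 2 <;> dsimp only
    · rw [dif_pos h]
      dsimp only [Sum.elim_inl]
      ext
      · show 2 * (q.1 : ℝ) / 2 = q.1; ring
      · rfl
    · rw [dif_neg h]
      dsimp only [Sum.elim_inr]
      ext
      · show (2 * (q.1 : ℝ) - 1 + 1) / 2 = q.1; ring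
      · rfl

end

section
variable {a b : ℂ} {γ₁ γ₂ γ₃ : Path a b}

lemma fiberEquiv_continuous (H₁ : Path.Homotopy γ₁ γ₂) (H₂ : Path.Homotopy γ₂ γ₃) (x : ℂ)
    (hx : x ∉ Set.range γ₂) : Continuous (fiberEquiv H₁ H₂ x hx) := by
  apply Continuous.sumElim
  · refine Continuous.subtype_mk ?_ _
    refine Continuous.prodMk (Continuous.subtype_mk ?_ _) ?_
    · exact ((continuous_subtype_val.comp
        (continuous_fst.comp continuous_subtype_val))).div_const 2
    · exact continuous_snd.comp continuous_subtype_val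
  · refine Continuous.subtype_mk ?_ _
    refine Continuous.prodMk (Continuous.subtype_mk ?_ _) ?_
    · exact (((continuous_subtype_val.comp
        (continuous_fst.comp continuous_subtype_val))).add continuous_const).div_const 2
    · exact continuous_snd.comp continuous_subtype_val

theorem stmt_1' {a b : ℂ} (γ₁ γ₂ γ₃ : Path a b)
    (H₁ : Path.Homotopy γ₁ γ₂) (H₂ : Path.Homotopy γ₂ γ₃) (x : ℂ)
    (hx : x ∉ Set.range γ₂) :
    ENat.card (ConnectedComponents ↥(⇑(H₁.trans H₂) ⁻¹' {x}))
      = ENat.card (ConnectedComponents ↥(⇑H₁ ⁻¹' {x}))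
        + ENat.card (ConnectedComponents ↥(⇑H₂ ⁻¹' {x})) := by
  have hA : IsClosed (⇑H₁ ⁻¹' {x}) := isClosed_singleton.preimage H₁.continuous
  have hB : IsClosed (⇑H₂ ⁻¹' {x}) := isClosed_singleton.preimage H₂.continuous
  haveI : CompactSpace ↥(⇑H₁ ⁻¹' {x}) := isCompact_iff_compactSpace.mp hA.isCompact
  haveI : CompactSpace ↥(⇑H₂ ⁻¹' {x}) := isCompact_iff_compactSpace.mp hB.isCompact
  have homeo := Continuous.homeoOfEquivCompactToT2
    (f := fiberEquiv H₁ H₂ x hx) (fiberEquiv_continuous H₁ H₂ x hx)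
  rw [← ENat.card_sum]
  exact ENat.card_congr ((ccCongr homeo).symm.trans (ccSum _ _))

end

/-- For a point not on the middle curve, the number of sweeps of a concatenated homotopy
is exactly the sum of the numbers of sweeps of the pieces. -/
theorem stmt_1 {a b : ℂ} (γ₁ γ₂ γ₃ : Path a b)
    (H₁ : Path.Homotopy γ₁ γ₂) (H₂ : Path.Homotopy γ₂ γ₃) (x : ℂ)
    (hx : x ∉ Set.range γ₂) :
    homE (H₁.trans H₂) x = homE H₁ x + homE H₂ x := by
  exact stmt_1' γ₁ γ₂ γ₃ H₁ H₂ x hx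
end
end

section
/- Let γ₁, γ₂, γ₃ : [0,1] → ℂ be continu103us paths with common endpoints, let H₁ be a homotopy from γ₁ to γ₂ and H₂ a homotopy from γ₂ to γ₃, and suppose the range of γ₂ is a Lebesgue-null subset of ℂ. Then Area(H₁ + H₂) = Area(H₁) + Area(H₂). -/
open MeasureTheory unitInterval ENNReal

section AuxHA
open Set Topology


lemma natCast_le_enatCard_iff {α : Type} {n : ℕ} :
    (n : ℕ∞) ≤ ENat.card α ↔ Nonempty (Fin n ↪ α) := by
  rw [ENat.card, Cardinal.natCast_le_toENat_iff, ← Cardinal.mk_fin n]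
  exact Cardinal.le_def _ _

def Homeomorph.connectedComponentsEquiv {X Y : Type*} [TopologicalSpace X] [TopologicalSpace Y]
    (e : X ≃ₜ Y) : ConnectedComponents X ≃ ConnectedComponents Y where
  toFun := e.continuous.connectedComponentsMap
  invFun := e.symm.continuous.connectedComponentsMap
  left_inv := by rintro ⟨x⟩; exact congrArg ConnectedComponents.mk (e.symm_apply_apply x)
  right_inv := by rintro ⟨y⟩; exact congrArg ConnectedComponents.mk (e.apply_symm_apply y)

def sumConnectedComponentsEquiv (X Y : Type*) [TopologicalSpace X] [TopologicalSpace Y] :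
    ConnectedComponents (X ⊕ Y) ≃ (ConnectedComponents X ⊕ ConnectedComponents Y) where
  toFun := Continuous.connectedComponentsLift
    (f := Sum.elim (Sum.inl ∘ ConnectedComponents.mk) (Sum.inr ∘ ConnectedComponents.mk))
    (by continuity)
  invFun := Sum.elim (Continuous.connectedComponentsMap continuous_inl)
    (Continuous.connectedComponentsMap continuous_inr)
  left_inv := by rintro ⟨x | y⟩ <;> rfl
  right_inv := by
    rintro (x | y) <;> [induction x using Quotient.ind; induction y using Quotient.ind] <;> rfl

lemma le_card_components_iff {X : Type} [TopologicalSpace X] [T2Space X] {K : Set X}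
    (hK : IsCompact K) (n : ℕ) :
    ((n + 1 : ℕ) : ℕ∞) ≤ ENat.card (ConnectedComponents ↥K) ↔
      ∃ V : Fin (n + 1) → Set X, (∀ i, IsOpen (V i)) ∧ Pairwise (Function.onFun Disjoint V) ∧
        (K ⊆ ⋃ i, V i) ∧ ∀ i, (K ∩ V i).Nonempty := by
  haveI : CompactSpace ↥K := isCompact_iff_compactSpace.1 hK
  constructor
  · -- forward
    intro hcard
    rw [natCast_le_enatCard_iff] at hcard
    obtain ⟨f⟩ := hcard
    have hchoice : ∀ i, ∃ x : ↥K, (x : ConnectedComponents ↥K) = f i :=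
      fun i => ConnectedComponents.surjective_coe (f i)
    choose x hx using hchoice
    have hxne : ∀ i j : Fin (n+1), i ≠ j → connectedComponent (x i) ≠ connectedComponent (x j) := by
      intro i j hij h
      exact hij (f.injective (by rw [← hx i, ← hx j, ConnectedComponents.coe_eq_coe, h]))
    have hsep : ∀ i j : Fin (n+1), i ≠ j → ∃ Z : Set ↥K, IsClopen Z ∧ x i ∈ Z ∧ x j ∉ Z := by
      intro i j hij
      by_contra hcon
      push_neg at hcon
      have hmem : x j ∈ connectedComponent (x i) := by
        rw [connectedComponent_eq_iInter_isClopen]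
        exact mem_iInter.2 fun Z => hcon Z Z.2.1 Z.2.2
      first
      | exact hxne i j hij (connectedComponent_eq hmem).symm
      | exact hxne i j hij (connectedComponent_eq hmem)
      | exact hxne j i (Ne.symm hij) (connectedComponent_eq hmem)
      | exact hxne j i (Ne.symm hij) (connectedComponent_eq hmem).symm
    choose Z hZcl hZmem hZnmem using hsep
    classical
    set W : Fin (n+1) → Set ↥K := fun i =>
      ⋂ j, if h : i = j then univ else Z i j h ∩ (Z j i (Ne.symm h))ᶜ with hW
    have hWcl : ∀ i, IsClopen (W i) := by
      intro i
      refine ⟨isClosed_iInter fun j => ?_, isOpen_iInter_of_finite fun j => ?_⟩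
      · split_ifs with h
        · exact isClosed_univ
        · exact ((hZcl i j h).1.inter (hZcl j i (Ne.symm h)).2.isClosed_compl)
      · split_ifs with h
        · exact isOpen_univ
        · exact ((hZcl i j h).2.inter (hZcl j i (Ne.symm h)).1.isOpen_compl)
    have hWmem : ∀ i, x i ∈ W i := by
      intro i
      refine mem_iInter.2 fun j => ?_
      split_ifs with h
      · trivial
      · exact ⟨hZmem i j h, hZnmem j i (Ne.symm h)⟩
    have hWsub : ∀ i j (h : i ≠ j), W i ⊆ Z i j h := by
      intro i j h y hy
      have := mem_iInter.1 hy j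
      rw [dif_neg h] at this
      exact this.1
    have hWsub2 : ∀ i j (h : i ≠ j), W j ⊆ (Z i j h)ᶜ := by
      intro i j h y hy
      have := mem_iInter.1 hy i
      rw [dif_neg (Ne.symm h)] at this
      exact this.2
    have hWdisj : ∀ i j, i ≠ j → Disjoint (W i) (W j) := by
      intro i j h
      exact disjoint_left.2 fun y hyi hyj => (hWsub2 i j h hyj) (hWsub i j h hyi)
    have hWnmem : ∀ j, j ≠ (0 : Fin (n+1)) → x 0 ∉ W j :=
      fun j hj hmem => hZnmem j 0 hj (hWsub j 0 hj hmem)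
    -- clopen partition C
    set C : Fin (n+1) → Set ↥K := fun i =>
      if i = 0 then (⋃ j, if j = (0 : Fin (n+1)) then (∅ : Set ↥K) else W j)ᶜ else W i with hC
    have hUo : IsOpen (⋃ j, if j = (0 : Fin (n+1)) then (∅ : Set ↥K) else W j) := by
      refine isOpen_iUnion fun j => ?_
      split_ifs
      · exact isOpen_empty
      · exact (hWcl j).2
    have hUc : IsClosed (⋃ j, if j = (0 : Fin (n+1)) then (∅ : Set ↥K) else W j) := by
      refine isClosed_iUnion_of_finite fun j => ?_
      split_ifs
      · exact isClosed_empty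
      · exact (hWcl j).1
    have hCcl : ∀ i, IsClopen (C i) := by
      intro i
      simp only [hC]
      split_ifs
      · exact ⟨hUo.isClosed_compl, hUc.isOpen_compl⟩
      · exact hWcl i
    have hCmem : ∀ i, x i ∈ C i := by
      intro i
      simp only [hC]
      split_ifs with h
      · subst h
        intro hmem
        rcases mem_iUnion.1 hmem with ⟨j, hj⟩
        by_cases h0 : j = 0
        · rw [if_pos h0] at hj; exact hj
        · rw [if_neg h0] at hj; exact hWnmem j h0 hj
      · exact hWmem i
    have hCdisj : ∀ i j, i ≠ j → Disjoint (C i) (C j) := by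
      intro i j h
      simp only [hC]
      split_ifs with hi hj hj
      · exact absurd (hi.trans hj.symm) h
      · refine disjoint_left.2 fun y hyi hyj => hyi ?_
        exact mem_iUnion.2 ⟨j, by rw [if_neg hj]; exact hyj⟩
      · refine disjoint_right.2 fun y hyj hyi => hyj ?_
        exact mem_iUnion.2 ⟨i, by rw [if_neg hi]; exact hyi⟩
      · exact hWdisj i j h
    have hCcover : (⋃ i, C i) = univ := by
      refine eq_univ_of_forall fun y => ?_
      by_cases hy : y ∈ C 0
      · exact mem_iUnion.2 ⟨0, hy⟩
      · have hy' : y ∈ ⋃ j, if j = (0 : Fin (n+1)) then (∅ : Set ↥K) else W j := by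
          by_contra hcon
          exact hy (by simp only [hC, if_pos rfl]; exact hcon)
        rcases mem_iUnion.1 hy' with ⟨j, hj⟩
        by_cases h0 : j = 0
        · rw [if_pos h0] at hj; exact hj.elim
        · rw [if_neg h0] at hj
          exact mem_iUnion.2 ⟨j, by simp only [hC]; rw [if_neg h0]; exact hj⟩
    -- push to ambient space
    set D : Fin (n+1) → Set X := fun i => Subtype.val '' C i with hD
    have hDcomp : ∀ i, IsCompact (D i) :=
      fun i => ((hCcl i).1.isCompact).image continuous_subtype_val
    have hDdisj : ∀ i j, i ≠ j → Disjoint (D i) (D j) := by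
      intro i j h
      exact (Set.disjoint_image_of_injective Subtype.val_injective (hCdisj i j h))
    have hDne : ∀ i, (D i).Nonempty := fun i => ⟨x i, mem_image_of_mem _ (hCmem i)⟩
    have hDsub : ∀ i, D i ⊆ K := by
      intro i y hy
      rcases hy with ⟨z, _, rfl⟩
      exact z.2
    have hDcover : K ⊆ ⋃ i, D i := by
      intro y hy
      have : (⟨y, hy⟩ : ↥K) ∈ ⋃ i, C i := hCcover ▸ mem_univ _
      rcases mem_iUnion.1 this with ⟨i, hi⟩
      exact mem_iUnion.2 ⟨i, mem_image_of_mem _ hi⟩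
    -- separate by opens
    have hsep2 : ∀ i j, i ≠ j → SeparatedNhds (D i) (D j) :=
      fun i j h => SeparatedNhds.of_isCompact_isCompact (hDcomp i) (hDcomp j) (hDdisj i j h)
    have hsep2' : ∀ i j (h : i ≠ j), ∃ A B : Set X,
        IsOpen A ∧ IsOpen B ∧ D i ⊆ A ∧ D j ⊆ B ∧ Disjoint A B := fun i j h => hsep2 i j h
    choose A B hAo hBo hDA hDB hABd using hsep2'
    set U : Fin (n+1) → Set X := fun i =>
      ⋂ j, if h : i = j then univ else A i j h ∩ B j i (Ne.symm h) with hU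
    have hUopen : ∀ i, IsOpen (U i) := by
      intro i
      refine isOpen_iInter_of_finite fun j => ?_
      split_ifs with h
      · exact isOpen_univ
      · exact (hAo i j h).inter (hBo j i (Ne.symm h))
    have hDU : ∀ i, D i ⊆ U i := by
      intro i y hy
      refine mem_iInter.2 fun j => ?_
      split_ifs with h
      · trivial
      · exact ⟨hDA i j h hy, hDB j i (Ne.symm h) hy⟩
    have hUdisj : ∀ i j, i ≠ j → Disjoint (U i) (U j) := by
      intro i j h
      have h1 : U i ⊆ A i j h := by
        intro y hy
        have := mem_iInter.1 hy j
        rw [dif_neg h] at this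
        exact this.1
      have h2 : U j ⊆ B i j h := by
        intro y hy
        have := mem_iInter.1 hy i
        rw [dif_neg (Ne.symm h)] at this
        exact this.2
      exact (hABd i j h).mono h1 h2
    refine ⟨U, hUopen, fun i j h => hUdisj i j h, ?_, ?_⟩
    · exact hDcover.trans (iUnion_mono fun i => hDU i)
    · exact fun i => ((hDne i).mono (subset_inter (hDsub i) (hDU i)))
  · -- backward
    rintro ⟨V, hVo, hVd, hVc, hVne⟩
    rw [natCast_le_enatCard_iff]
    choose w hwK hwV using fun i => hVne i
    have hclopen : ∀ i, IsClopen (Subtype.val ⁻¹' (V i) : Set ↥K) := by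
      intro i
      constructor
      · have heq : (Subtype.val ⁻¹' (V i) : Set ↥K)
            = (⋃ j, ⋃ (_ : j ≠ i), (Subtype.val ⁻¹' (V j) : Set ↥K))ᶜ := by
          ext y
          simp only [mem_preimage, mem_compl_iff, mem_iUnion, not_exists]
          constructor
          · intro hy j hj hyj
            exact (hVd hj).le_bot (⟨hyj, hy⟩ : (y : X) ∈ V j ∩ V i)
          · intro h
            rcases mem_iUnion.1 (hVc y.2) with ⟨j, hj⟩
            rcases eq_or_ne j i with rfl | hne
            · exact hj
            · exact absurd hj (h j hne)
        rw [heq]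
        exact (isOpen_iUnion fun j => isOpen_iUnion fun _ =>
          (hVo j).preimage continuous_subtype_val).isClosed_compl
      · exact (hVo i).preimage continuous_subtype_val
    refine ⟨⟨fun i => ConnectedComponents.mk ⟨w i, hwK i⟩, ?_⟩⟩
    intro i j hij
    by_contra hne
    have h1 : (⟨w i, hwK i⟩ : ↥K) ∈ connectedComponent (⟨w j, hwK j⟩ : ↥K) :=
      ConnectedComponents.coe_eq_coe'.1 hij
    have h2 : connectedComponent (⟨w j, hwK j⟩ : ↥K) ⊆ (Subtype.val ⁻¹' (V j) : Set ↥K) :=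
      (hclopen j).connectedComponent_subset (hwV j)
    have : w i ∈ V j := h2 h1
    exact (hVd hne).le_bot (⟨hwV i, this⟩ : w i ∈ V i ∩ V j)


lemma exists_compact_cover_of_isOpen {Y : Type} [MetricSpace Y] [CompactSpace Y]
    {U : Set Y} (hU : IsOpen U) : ∃ C : ℕ → Set Y, (∀ m, IsCompact (C m)) ∧ U = ⋃ m, C m := by
  refine ⟨fun m => {y | ((m : ℝ≥0∞) + 1)⁻¹ ≤ EMetric.infEdist y Uᶜ}, fun m => ?_, ?_⟩
  · exact (isClosed_le continuous_const EMetric.continuous_infEdist).isCompact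
  · ext y
    simp only [mem_iUnion, mem_setOf_eq]
    constructor
    · intro hy
      have h1 : y ∉ closure Uᶜ := by
        rw [hU.isClosed_compl.closure_eq]
        exact fun h => h hy
      have h2 : 0 < EMetric.infEdist y Uᶜ := Metric.infEDist_pos_iff_notMem_closure.2 h1
      obtain ⟨m, hm⟩ := ENNReal.exists_inv_nat_lt h2.ne'
      refine ⟨m, le_trans ?_ hm.le⟩
      exact ENNReal.inv_le_inv.2 (by exact_mod_cast Nat.le_succ m)
    · rintro ⟨m, hm⟩
      by_contra hy
      have : EMetric.infEdist y Uᶜ = 0 := EMetric.infEdist_zero_of_mem hy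
      rw [this] at hm
      exact absurd (le_antisymm (le_of_not_gt fun h => absurd hm (not_le.2 (lt_of_le_of_lt (le_of_eq rfl) h))) zero_le) (by
        simp [ENNReal.inv_eq_zero])

lemma measurableSet_image_of_isOpen {Y : Type} [MetricSpace Y] [CompactSpace Y]
    {f : Y → ℂ} (hf : Continuous f) {U : Set Y} (hU : IsOpen U) :
    MeasurableSet (f '' U) := by
  obtain ⟨C, hC, rfl⟩ := exists_compact_cover_of_isOpen hU
  rw [image_iUnion]
  exact MeasurableSet.iUnion fun m => (((hC m).image hf).isClosed).measurableSet


lemma image_eq_nonempty_fiber {Y : Type} (f : Y → ℂ) (v : Set Y) :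
    f '' v = {p | (f ⁻¹' {p} ∩ v).Nonempty} := by
  ext p
  constructor
  · rintro ⟨x, hxv, rfl⟩; exact ⟨x, rfl, hxv⟩
  · rintro ⟨x, hx1, hx2⟩; exact ⟨x, hx2, hx1⟩

lemma compl_image_compl_eq {Y : Type} (f : Y → ℂ) (v : Set Y) :
    (f '' vᶜ)ᶜ = {p | f ⁻¹' {p} ⊆ v} := by
  ext p
  simp only [mem_compl_iff, mem_image, not_exists, not_and, mem_setOf_eq]
  constructor
  · intro h x hx
    by_contra hxv
    exact h x hxv hx
  · intro h x hxv hfx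
    exact hxv (h hfx)

lemma measurableSet_le_card_fiber {Y : Type} [MetricSpace Y] [CompactSpace Y]
    [SecondCountableTopology Y] {f : Y → ℂ} (hf : Continuous f) (n : ℕ) :
    MeasurableSet {p : ℂ | ((n + 1 : ℕ) : ℕ∞) ≤ ENat.card (ConnectedComponents ↥(f ⁻¹' {p}))} := by
  classical
  rcases isEmpty_or_nonempty Y with hY | hY
  · convert MeasurableSet.empty
    ext p
    simp only [mem_setOf_eq, mem_empty_iff_false, iff_false]
    intro hcard
    rw [natCast_le_enatCard_iff] at hcard
    obtain ⟨g⟩ := hcard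
    obtain ⟨x, -⟩ := ConnectedComponents.surjective_coe (g 0)
    exact hY.elim x.1
  obtain ⟨e, he⟩ : ∃ e : ℕ → Set Y, range e = TopologicalSpace.countableBasis Y := by
    refine ((TopologicalSpace.countable_countableBasis Y).exists_eq_range ?_).imp fun e h => h.symm
    obtain ⟨y⟩ := hY
    obtain ⟨v, hv, -, -⟩ := (TopologicalSpace.isBasis_countableBasis Y).exists_subset_of_mem_open
      (mem_univ y) isOpen_univ
    exact ⟨v, hv⟩
  have heo : ∀ k, IsOpen (e k) := fun k =>
    TopologicalSpace.isOpen_of_mem_countableBasis (he ▸ mem_range_self k)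
  set V : (Fin (n+1) → Finset ℕ) → Fin (n+1) → Set Y := fun s i => ⋃ k ∈ s i, e k with hV
  have hVo : ∀ s i, IsOpen (V s i) := fun s i => isOpen_biUnion fun k _ => heo k
  have key : {p : ℂ | ((n + 1 : ℕ) : ℕ∞) ≤ ENat.card (ConnectedComponents ↥(f ⁻¹' {p}))}
      = ⋃ (s : Fin (n+1) → Finset ℕ), ⋃ (_ : Pairwise (Function.onFun Disjoint (V s))),
          ({p : ℂ | f ⁻¹' {p} ⊆ ⋃ i, V s i} ∩ ⋂ i, {p : ℂ | (f ⁻¹' {p} ∩ V s i).Nonempty}) := by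
    ext p
    have hKcomp : IsCompact (f ⁻¹' {p}) := (isClosed_singleton.preimage hf).isCompact
    rw [mem_setOf_eq, le_card_components_iff hKcomp n]
    constructor
    · rintro ⟨W, hWo, hWd, hWc, hWne⟩
      set Q : Fin (n+1) → Set Y := fun i => f ⁻¹' {p} ∩ W i with hQ
      have hQW : ∀ i, Q i ⊆ W i := fun i => inter_subset_right
      have hQcomp : ∀ i, IsCompact (Q i) := by
        intro i
        have hQeq : Q i = f ⁻¹' {p} ∩ (⋃ j, ⋃ (_ : j ≠ i), W j)ᶜ := by
          ext y
          simp only [hQ, mem_inter_iff, mem_compl_iff, mem_iUnion, not_exists]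
          constructor
          · rintro ⟨h1, h2⟩
            exact ⟨h1, fun j hj hyj => (hWd hj).le_bot ⟨hyj, h2⟩⟩
          · rintro ⟨h1, h2⟩
            rcases mem_iUnion.1 (hWc h1) with ⟨j, hj⟩
            rcases eq_or_ne j i with rfl | hne
            · exact ⟨h1, hj⟩
            · exact absurd hj (h2 j hne)
        rw [hQeq]
        exact ((isClosed_singleton.preimage hf).inter
          (isOpen_iUnion fun j => isOpen_iUnion fun _ => hWo j).isClosed_compl).isCompact
      have hcover : ∀ i, ∃ t : Finset ℕ, Q i ⊆ ⋃ k ∈ t, (if e k ⊆ W i then e k else ∅) := by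
        intro i
        refine (hQcomp i).elim_finite_subcover (fun k => if e k ⊆ W i then e k else ∅)
          (fun k => by split_ifs; exacts [heo k, isOpen_empty]) ?_
        intro y hy
        obtain ⟨v, hv, hyv, hvW⟩ :=
          (TopologicalSpace.isBasis_countableBasis Y).exists_subset_of_mem_open ((hQW i) hy) (hWo i)
        obtain ⟨k, rfl⟩ : ∃ k, e k = v := by rwa [← he] at hv
        exact mem_iUnion.2 ⟨k, by rw [if_pos hvW]; exact hyv⟩
      choose t ht using hcover
      set s : Fin (n+1) → Finset ℕ := fun i => (t i).filter (fun k => e k ⊆ W i) with hs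
      have hVsW : ∀ i, V s i ⊆ W i := by
        intro i y hy
        rcases mem_iUnion₂.1 hy with ⟨k, hk, hyk⟩
        exact (Finset.mem_filter.1 hk).2 hyk
      have hQV : ∀ i, Q i ⊆ V s i := by
        intro i y hy
        rcases mem_iUnion₂.1 (ht i hy) with ⟨k, hk, hyk⟩
        by_cases hkW : e k ⊆ W i
        · rw [if_pos hkW] at hyk
          exact mem_iUnion₂.2 ⟨k, Finset.mem_filter.2 ⟨hk, hkW⟩, hyk⟩
        · rw [if_neg hkW] at hyk
          exact hyk.elim
      refine mem_iUnion.2 ⟨s, mem_iUnion.2 ⟨fun i j hij => ((hWd hij).mono (hVsW i) (hVsW j)), ?_, ?_⟩⟩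
      · intro y hy
        rcases mem_iUnion.1 (hWc hy) with ⟨i, hi⟩
        exact mem_iUnion.2 ⟨i, hQV i ⟨hy, hi⟩⟩
      · refine mem_iInter.2 fun i => ?_
        obtain ⟨y, hy⟩ := hWne i
        exact ⟨y, hy.1, hQV i ⟨hy.1, hy.2⟩⟩
    · intro hp
      rcases mem_iUnion.1 hp with ⟨s, hps⟩
      rcases mem_iUnion.1 hps with ⟨hdisj, hmem⟩
      exact ⟨V s, hVo s, hdisj, hmem.1, fun i => mem_iInter.1 hmem.2 i⟩
  rw [key]
  refine MeasurableSet.iUnion fun s => MeasurableSet.iUnion fun hdisj => MeasurableSet.inter ?_ ?_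
  · rw [← compl_image_compl_eq]
    exact ((((isOpen_iUnion (hVo s)).isClosed_compl.isCompact.image hf).isClosed).measurableSet).compl
  · exact MeasurableSet.iInter fun i => by
      rw [← image_eq_nonempty_fiber]
      exact measurableSet_image_of_isOpen hf (hVo s i)


lemma enat_sup_rep (c : ℕ∞) :
    (⨆ m : ℕ, if (m : ℕ∞) ≤ c then (m : ℝ≥0∞) else 0) = (c : ℝ≥0∞) := by
  induction c using ENat.recTopCoe with
  | top =>
    simp only [le_top, if_true, ENat.toENNReal_top]
    exact ENNReal.iSup_natCast
  | coe k =>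
    apply le_antisymm
    · refine iSup_le fun m => ?_
      split_ifs with h
      · rw [ENat.toENNReal_coe]
        exact_mod_cast Nat.cast_le.1 h
      · exact zero_le
    · refine le_iSup_of_le k ?_
      rw [if_pos le_rfl, ENat.toENNReal_coe]

lemma measurable_enn_card {Y : Type} [MetricSpace Y] [CompactSpace Y] [SecondCountableTopology Y]
    {f : Y → ℂ} (hf : Continuous f) :
    Measurable fun p => ((ENat.card (ConnectedComponents ↥(f ⁻¹' {p})) : ℕ∞) : ℝ≥0∞) := by
  classical
  have hms : ∀ m : ℕ,
      MeasurableSet {p : ℂ | (m : ℕ∞) ≤ ENat.card (ConnectedComponents ↥(f ⁻¹' {p}))} := by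
    intro m
    cases m with
    | zero =>
      convert MeasurableSet.univ
      ext p
      simpa using (zero_le _ : (0 : ℕ∞) ≤ _)
    | succ k => exact measurableSet_le_card_fiber hf k
  have hrep : (fun p => ((ENat.card (ConnectedComponents ↥(f ⁻¹' {p})) : ℕ∞) : ℝ≥0∞))
      = fun p => ⨆ m : ℕ,
          ({p : ℂ | (m : ℕ∞) ≤ ENat.card (ConnectedComponents ↥(f ⁻¹' {p}))}).indicator
            (fun _ => (m : ℝ≥0∞)) p := by
    funext p
    rw [← enat_sup_rep (ENat.card (ConnectedComponents ↥(f ⁻¹' {p})))]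
    congr 1
    funext m
    rw [Set.indicator_apply]
    congr 1
  rw [hrep]
  exact Measurable.iSup fun m => measurable_const.indicator (hms m)


end AuxHA


noncomputable section

def dl (s : I) : I := ⟨(s : ℝ)/2, by constructor <;> [linarith [s.2.1]; linarith [s.2.2]]⟩

def dr (s : I) : I := ⟨((s : ℝ)+1)/2, by constructor <;> [linarith [s.2.1]; linarith [s.2.2]]⟩

lemma congr_fst {a b : ℂ} {γ γ' : Path a b} (H : Path.Homotopy γ γ') {u v t : I}
    (h : (u : ℝ) = (v : ℝ)) : H (u, t) = H (v, t) := by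
  have : u = v := Subtype.ext h
  rw [this]

open Set Topology in
lemma homE_trans {a b : ℂ} {γ₁ γ₂ γ₃ : Path a b} (H₁ : Path.Homotopy γ₁ γ₂)
    (H₂ : Path.Homotopy γ₂ γ₃) {p : ℂ} (hp : p ∉ Set.range γ₂) :
    homE (H₁.trans H₂) p = homE H₁ p + homE H₂ p := by
  set F : Set (I × I) := ⇑(H₁.trans H₂) ⁻¹' {p} with hF
  set F₁ : Set (I × I) := ⇑H₁ ⁻¹' {p} with hF₁
  set F₂ : Set (I × I) := ⇑H₂ ⁻¹' {p} with hF₂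
  -- points of F₂ have positive first coordinate
  have hne0 : ∀ x : I × I, x ∈ F₂ → (0 : ℝ) < x.1 := by
    rintro ⟨s, t⟩ hx
    rcases lt_or_eq_of_le s.2.1 with h | h
    · exact h
    · exfalso
      apply hp
      refine ⟨t, ?_⟩
      have hs : s = 0 := Subtype.ext h.symm
      have hx' : ⇑H₂ (s, t) = p := hx
      rw [hs] at hx'
      rw [← hx']
      exact (H₂.apply_zero t).symm
  -- membership lemmas
  have hmem1 : ∀ x : I × I, x ∈ F₁ → ((dl x.1, x.2) : I × I) ∈ F := by
    rintro ⟨s, t⟩ hx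
    have hx' : ⇑H₁ (s, t) = p := hx
    show ⇑(H₁.trans H₂) (dl s, t) ∈ ({p} : Set ℂ)
    rw [mem_singleton_iff, Path.Homotopy.trans_apply]
    have hle : ((dl s : I) : ℝ) ≤ 1/2 := by
      show (s : ℝ)/2 ≤ 1/2
      linarith [s.2.2]
    rw [dif_pos hle]
    rw [congr_fst H₁ (show (2 * ((dl s : I) : ℝ)) = (s : ℝ) by show 2 * ((s:ℝ)/2) = (s:ℝ); ring)]
    exact hx'
  have hmem2 : ∀ x : I × I, x ∈ F₂ → ((dr x.1, x.2) : I × I) ∈ F := by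
    rintro ⟨s, t⟩ hx
    have hx' : ⇑H₂ (s, t) = p := hx
    have hpos := hne0 (s, t) hx
    show ⇑(H₁.trans H₂) (dr s, t) ∈ ({p} : Set ℂ)
    rw [mem_singleton_iff, Path.Homotopy.trans_apply]
    have hle : ¬ ((dr s : I) : ℝ) ≤ 1/2 := by
      show ¬ ((s : ℝ)+1)/2 ≤ 1/2
      simp only [not_le]
      linarith
    rw [dif_neg hle]
    rw [congr_fst H₂ (show (2 * ((dr s : I) : ℝ) - 1) = (s : ℝ) by
      show 2 * (((s:ℝ)+1)/2) - 1 = (s:ℝ); ring)]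
    exact hx'
  classical
  set g : ↥F₁ ⊕ ↥F₂ → ↥F := Sum.elim
    (fun x => ⟨(dl x.1.1, x.1.2), hmem1 x.1 x.2⟩)
    (fun x => ⟨(dr x.1.1, x.1.2), hmem2 x.1 x.2⟩) with hg
  have hgc : Continuous g := by
    refine Continuous.sumElim ?_ ?_ <;>
    · refine Continuous.subtype_mk ?_ _
      refine Continuous.prodMk ?_ ?_
      · refine Continuous.subtype_mk ?_ _
        fun_prop
      · fun_prop
  have hginj : Function.Injective g := by
    rintro (x | x) (y | y) h <;>
      simp only [hg, Sum.elim_inl, Sum.elim_inr, Subtype.mk.injEq, Prod.mk.injEq] at h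
    · apply congrArg
      apply Subtype.ext
      refine Prod.ext ?_ h.2
      have : ((x.1.1 : ℝ))/2 = ((y.1.1 : ℝ))/2 := congrArg Subtype.val h.1
      exact Subtype.ext (by linarith)
    · exfalso
      have h1 : ((x.1.1 : ℝ))/2 = ((y.1.1 : ℝ)+1)/2 := congrArg Subtype.val h.1
      have h2 := hne0 y.1 y.2
      have h3 := x.1.1.2.2
      linarith
    · exfalso
      have h1 : ((x.1.1 : ℝ)+1)/2 = ((y.1.1 : ℝ))/2 := congrArg Subtype.val h.1
      have h2 := hne0 x.1 x.2
      have h3 := y.1.1.2.2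
      linarith
    · apply congrArg
      apply Subtype.ext
      refine Prod.ext ?_ h.2
      have : ((x.1.1 : ℝ)+1)/2 = ((y.1.1 : ℝ)+1)/2 := congrArg Subtype.val h.1
      exact Subtype.ext (by linarith)
  have hgsurj : Function.Surjective g := by
    rintro ⟨⟨s, t⟩, hz⟩
    have hz' : ⇑(H₁.trans H₂) (s, t) = p := hz
    rw [Path.Homotopy.trans_apply] at hz'
    by_cases hle : (s : ℝ) ≤ 1/2
    · rw [dif_pos hle] at hz'
      refine ⟨Sum.inl ⟨(⟨2 * (s : ℝ), (unitInterval.mul_pos_mem_iff zero_lt_two).2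
        ⟨s.2.1, hle⟩⟩, t), hz'⟩, ?_⟩
      simp only [hg, Sum.elim_inl, Subtype.mk.injEq, Prod.mk.injEq]
      exact ⟨Subtype.ext (by show (2 * (s:ℝ))/2 = (s:ℝ); ring), trivial⟩
    · rw [dif_neg hle] at hz'
      refine ⟨Sum.inr ⟨(⟨2 * (s : ℝ) - 1, unitInterval.two_mul_sub_one_mem_iff.2
        ⟨(not_le.1 hle).le, s.2.2⟩⟩, t), hz'⟩, ?_⟩
      simp only [hg, Sum.elim_inr, Subtype.mk.injEq, Prod.mk.injEq]
      exact ⟨Subtype.ext (by show ((2 * (s:ℝ) - 1)+1)/2 = (s:ℝ); ring), trivial⟩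
  haveI : CompactSpace ↥F₁ :=
    isCompact_iff_compactSpace.1 ((isClosed_singleton.preimage H₁.continuous).isCompact)
  haveI : CompactSpace ↥F₂ :=
    isCompact_iff_compactSpace.1 ((isClosed_singleton.preimage H₂.continuous).isCompact)
  have hom : (↥F₁ ⊕ ↥F₂) ≃ₜ ↥F :=
    Continuous.homeoOfEquivCompactToT2 (f := Equiv.ofBijective g ⟨hginj, hgsurj⟩) hgc
  show ENat.card (ConnectedComponents ↥F) = ENat.card (ConnectedComponents ↥F₁)
    + ENat.card (ConnectedComponents ↥F₂)
  rw [ENat.card_congr (Homeomorph.connectedComponentsEquiv hom).symm,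
    ENat.card_congr (sumConnectedComponentsEquiv ↥F₁ ↥F₂), ENat.card_sum]


/-- Homotopy area is additive under concatenation, provided the middle curve has
Lebesgue-null range. -/
theorem stmt_2 {a b : ℂ} (γ₁ γ₂ γ₃ : Path a b)
    (H₁ : Path.Homotopy γ₁ γ₂) (H₂ : Path.Homotopy γ₂ γ₃)
    (hnull : volume (Set.range γ₂) = 0) :
    homArea (H₁.trans H₂) = homArea H₁ + homArea H₂ := by
  have hae : ∀ᵐ p : ℂ, p ∉ Set.range γ₂ :=
    MeasureTheory.measure_eq_zero_iff_ae_notMem.1 hnull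
  have hcongr : (fun p => (homE (H₁.trans H₂) p : ℝ≥0∞))
      =ᵐ[volume] fun p => (homE H₁ p : ℝ≥0∞) + (homE H₂ p : ℝ≥0∞) := by
    filter_upwards [hae] with p hp
    rw [homE_trans H₁ H₂ hp, ENat.toENNReal_add]
  rw [homArea, lintegral_congr_ae hcongr,
    lintegral_add_left (f := fun p => (homE H₁ p : ℝ≥0∞))
      (measurable_enn_card H₁.continuous) (fun p => (homE H₂ p : ℝ≥0∞))]
  rfl
end
end

section
/- For all continuous paths γ₁, γ₂, γ₃ : [0,1] → ℂ with common endpoints, the minimum homotopy area satisfies the triangle inequality: σ(γ₁, γ₃) ≤ σ(γ₁, γ₂) + σ(γ₂, γ₃). -/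
open MeasureTheory unitInterval ENNReal Metric Set

noncomputable section

namespace MHAAux

/-! ### Cardinality and connected-component helper lemmas -/

lemma enatCard_le_of_surjective {α β : Type} (f : α → β) (hf : Function.Surjective f) :
    ENat.card β ≤ ENat.card α :=
  Cardinal.toENat.monotone' (Cardinal.mk_le_of_surjective hf)

lemma natCast_le_enatCard_iff {α : Type} {k : ℕ} :
    (k : ℕ∞) ≤ ENat.card α ↔ Nonempty (Fin k ↪ α) := by
  unfold ENat.card
  rw [Cardinal.natCast_le_toENat_iff, ← Cardinal.mk_fin k, Cardinal.le_def]

/-- The induced map on connected components. -/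
def ccMap {X Y : Type} [TopologicalSpace X] [TopologicalSpace Y] {f : X → Y}
    (hf : Continuous f) : ConnectedComponents X → ConnectedComponents Y :=
  (ConnectedComponents.continuous_coe.comp hf).connectedComponentsLift

lemma ccMap_mk {X Y : Type} [TopologicalSpace X] [TopologicalSpace Y] {f : X → Y}
    (hf : Continuous f) (x : X) :
    ccMap hf (ConnectedComponents.mk x) = ConnectedComponents.mk (f x) := rfl

lemma mk_eq_mk_of_mem_preconnected {X : Type*} [TopologicalSpace X] {s : Set X}
    (hs : IsPreconnected s) {x y : X} (hx : x ∈ s) (hy : y ∈ s) :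
    (ConnectedComponents.mk x) = ConnectedComponents.mk y := by
  rw [ConnectedComponents.coe_eq_coe']
  exact hs.subset_connectedComponent hy hx

lemma card_cc_le {A T : Type} [TopologicalSpace A] [TopologicalSpace T]
    {f : A → T} (hf : Continuous f)
    (hsur : ∀ t : T, ∃ a, (ConnectedComponents.mk (f a)) = ConnectedComponents.mk t) :
    ENat.card (ConnectedComponents T) ≤ ENat.card (ConnectedComponents A) := by
  apply enatCard_le_of_surjective (ccMap hf)
  intro c
  obtain ⟨t, rfl⟩ := ConnectedComponents.surjective_coe c
  obtain ⟨a, ha⟩ := hsur t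
  exact ⟨ConnectedComponents.mk a, ha⟩

lemma card_cc_le_add {A B T : Type} [TopologicalSpace A] [TopologicalSpace B] [TopologicalSpace T]
    {f : A → T} {g : B → T} (hf : Continuous f) (hg : Continuous g)
    (hsur : ∀ t : T, (∃ a, (ConnectedComponents.mk (f a)) = ConnectedComponents.mk t) ∨
      ∃ b, (ConnectedComponents.mk (g b)) = ConnectedComponents.mk t) :
    ENat.card (ConnectedComponents T) ≤
      ENat.card (ConnectedComponents A) + ENat.card (ConnectedComponents B) := by
  rw [← ENat.card_sum]
  apply enatCard_le_of_surjective (Sum.elim (ccMap hf) (ccMap hg))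
  intro c
  obtain ⟨t, rfl⟩ := ConnectedComponents.surjective_coe c
  rcases hsur t with ⟨a, ha⟩ | ⟨b, hb⟩
  · exact ⟨Sum.inl (ConnectedComponents.mk a), ha⟩
  · exact ⟨Sum.inr (ConnectedComponents.mk b), hb⟩

lemma isPreconnected_preimage_val {X : Type*} [TopologicalSpace X] {U s : Set X}
    (hs : IsPreconnected s) (hsU : s ⊆ U) :
    IsPreconnected (Subtype.val ⁻¹' s : Set ↥U) := by
  haveI : PreconnectedSpace ↥s := Subtype.preconnectedSpace hs
  have hcont : Continuous (fun x : ↥s => (⟨x.1, hsU x.2⟩ : ↥U)) :=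
    Continuous.subtype_mk continuous_subtype_val _
  have himg : (fun x : ↥s => (⟨x.1, hsU x.2⟩ : ↥U)) '' univ = (Subtype.val ⁻¹' s : Set ↥U) := by
    ext z
    simp only [image_univ, mem_range, mem_preimage]
    constructor
    · rintro ⟨x, rfl⟩; exact x.2
    · intro hz; exact ⟨⟨z.1, hz⟩, Subtype.ext rfl⟩
  rw [← himg]
  exact isPreconnected_univ.image _ hcont.continuousOn

lemma toENNReal_le_of_forall_nat {x : ℕ∞} {S : ℝ≥0∞}
    (h : ∀ k : ℕ, (k : ℕ∞) ≤ x → ((k : ℕ) : ℝ≥0∞) ≤ S) : (x : ℝ≥0∞) ≤ S := by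
  induction x using ENat.recTopCoe with
  | top =>
    have h' : ∀ k : ℕ, ((k : ℕ) : ℝ≥0∞) ≤ S := fun k => h k le_top
    calc ((⊤ : ℕ∞) : ℝ≥0∞) = ⊤ := ENat.toENNReal_top
    _ = ⨆ k : ℕ, ((k : ℕ) : ℝ≥0∞) := ENNReal.iSup_natCast.symm
    _ ≤ S := iSup_le h'
  | coe n => simpa using h n le_rfl

/-! ### Connectedness of closed balls in `I × I` -/

lemma isPreconnected_val_preimage_Icc (c d : ℝ) :
    IsPreconnected ((fun x : I => (x : ℝ)) ⁻¹' Icc c d) := by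
  have himg : (fun x : I => (x : ℝ)) ⁻¹' Icc c d
      = Set.projIcc (0:ℝ) 1 zero_le_one '' (Icc c d ∩ Icc 0 1) := by
    ext x
    simp only [mem_preimage, mem_image, mem_inter_iff]
    constructor
    · intro hx
      refine ⟨(x : ℝ), ⟨hx, x.2⟩, ?_⟩
      rw [Set.projIcc_of_mem zero_le_one x.2]
    · rintro ⟨y, ⟨hy1, hy2⟩, rfl⟩
      rw [Set.projIcc_of_mem zero_le_one hy2]
      exact hy1
  rw [himg, Set.Icc_inter_Icc]
  exact isPreconnected_Icc.image _ continuous_projIcc.continuousOn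

lemma closedBall_I (x : I) (r : ℝ) :
    closedBall x r = (fun y : I => (y : ℝ)) ⁻¹' Icc ((x : ℝ) - r) ((x : ℝ) + r) := by
  ext y
  simp only [mem_closedBall, mem_preimage, mem_Icc, Subtype.dist_eq, Real.dist_eq,
    abs_sub_le_iff]
  constructor
  · intro h; constructor <;> linarith [h.1, h.2]
  · intro h; constructor <;> linarith [h.1, h.2]

lemma isPreconnected_closedBall_I2 (x : I × I) (r : ℝ) :
    IsPreconnected (closedBall x r) := by
  rw [← closedBall_prod_same]
  refine IsPreconnected.prod ?_ ?_
  · rw [closedBall_I]; exact isPreconnected_val_preimage_Icc _ _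
  · rw [closedBall_I]; exact isPreconnected_val_preimage_Icc _ _

/-! ### Measurability of the fiber-component-counting function -/

theorem measurable_card_fiber {K : Type} [MetricSpace K] [CompactSpace K]
    (hball : ∀ (x : K) (r : ℝ), IsPreconnected (closedBall x r))
    {f : K → ℂ} (hf : Continuous f) :
    Measurable fun p : ℂ => ((ENat.card (ConnectedComponents ↥(f ⁻¹' {p}))) : ℝ≥0∞) := by
  classical
  have hTB : TotallyBounded (univ : Set K) := isCompact_univ.totallyBounded
  have hnet : ∀ n : ℕ, ∃ T : Finset K, ∀ x : K, ∃ t ∈ T, dist x t ≤ 1 / (n + 1 : ℝ) := by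
    intro n
    obtain ⟨t, htf, hcov⟩ := Metric.totallyBounded_iff.1 hTB (1 / (n + 1 : ℝ)) (by positivity)
    refine ⟨htf.toFinset, fun x => ?_⟩
    obtain ⟨y, hy, hxy⟩ := mem_iUnion₂.1 (hcov (mem_univ x))
    exact ⟨y, htf.mem_toFinset.2 hy, (mem_ball.1 hxy).le⟩
  choose T hT using hnet
  set δ : ℕ → ℝ := fun n => 1 / (n + 1 : ℝ) with hδ
  have hδpos : ∀ n, 0 < δ n := fun n => by simp only [hδ]; positivity
  set V : ℕ → ℂ → Finset K :=
    fun n p => (T n).filter fun t => p ∈ f '' closedBall t (δ n) with hV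
  set W : ℕ → ℂ → Set K := fun n p => ⋃ t ∈ V n p, closedBall t (δ n) with hW
  set M : ℕ → ℂ → ℝ≥0∞ :=
    fun n p => (ENat.card (ConnectedComponents ↥(W n p)) : ℝ≥0∞) with hM
  have hsubW : ∀ n p (x : K), f x = p → ∃ t ∈ V n p, x ∈ closedBall t (δ n) := by
    intro n p x hx
    obtain ⟨t, htT, hxt⟩ := hT n x
    refine ⟨t, ?_, mem_closedBall.2 hxt⟩
    simp only [hV, Finset.mem_filter]
    exact ⟨htT, ⟨x, mem_closedBall.2 hxt, hx⟩⟩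
  have hfibW : ∀ n p, (f ⁻¹' {p}) ⊆ W n p := by
    intro n p x hx
    obtain ⟨t, ht, hxt⟩ := hsubW n p x hx
    simp only [hW]
    exact mem_biUnion ht hxt
  -- each approximation is below the number of components of the fiber
  have hMle : ∀ n p, M n p ≤ (ENat.card (ConnectedComponents ↥(f ⁻¹' {p})) : ℝ≥0∞) := by
    intro n p
    simp only [hM]
    rw [ENat.toENNReal_le]
    refine card_cc_le (f := fun x : ↥(f ⁻¹' {p}) => (⟨x.1, hfibW n p x.2⟩ : ↥(W n p)))
      (Continuous.subtype_mk continuous_subtype_val _) ?_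
    rintro ⟨w, hw⟩
    rw [hW] at hw
    obtain ⟨t, ht, hwt⟩ := mem_iUnion₂.1 hw
    have hmeet : p ∈ f '' closedBall t (δ n) := by
      simp only [hV, Finset.mem_filter] at ht
      exact ht.2
    obtain ⟨x, hxcb, hxp⟩ := hmeet
    refine ⟨⟨x, hxp⟩, ?_⟩
    refine mk_eq_mk_of_mem_preconnected
      (s := (Subtype.val ⁻¹' closedBall t (δ n) : Set ↥(W n p)))
      (isPreconnected_preimage_val (hball t (δ n)) ?_) hxcb hwt
    intro z hz
    rw [hW]
    exact mem_biUnion ht hz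
  -- the fiber count is the supremum of the approximations
  have hEle : ∀ p, (ENat.card (ConnectedComponents ↥(f ⁻¹' {p})) : ℝ≥0∞) ≤ ⨆ n, M n p := by
    intro p
    apply toENNReal_le_of_forall_nat
    intro k hk
    rcases Nat.eq_zero_or_pos k with rfl | hkpos
    · simp
    obtain ⟨e⟩ := natCast_le_enatCard_iff.1 hk
    have hrep : ∀ i : Fin k, ∃ x : ↥(f ⁻¹' {p}), ConnectedComponents.mk x = e i :=
      fun i => ConnectedComponents.surjective_coe (e i)
    choose x hx using hrep
    haveI : CompactSpace ↥(f ⁻¹' {p}) :=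
      isCompact_iff_compactSpace.1 ((isClosed_singleton.preimage hf).isCompact)
    -- clopen separation with a positive gap, for each pair of indices
    have hpair : ∀ i j : Fin k, ∃ ε : ℝ, 0 < ε ∧ (i ≠ j → ∃ Z : Set ↥(f ⁻¹' {p}),
        IsClopen Z ∧ x i ∈ Z ∧ x j ∉ Z ∧
        ∀ u v : ↥(f ⁻¹' {p}), u ∈ Z → v ∉ Z → ε ≤ dist (u : K) (v : K)) := by
      intro i j
      by_cases hij : i = j
      · exact ⟨1, one_pos, fun h => absurd hij h⟩
      have hmkne : (ConnectedComponents.mk (x i)) ≠ ConnectedComponents.mk (x j) := by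
        rw [hx i, hx j]
        exact fun h => hij (e.injective h)
      have hnotmem : x j ∉ connectedComponent (x i) := by
        intro h
        exact hmkne (ConnectedComponents.coe_eq_coe'.2 h).symm
      rw [connectedComponent_eq_iInter_isClopen] at hnotmem
      simp only [mem_iInter, not_forall] at hnotmem
      obtain ⟨⟨Z, hZclopen, hxiZ⟩, hxjZ⟩ := hnotmem
      have hZcompact : IsCompact (Subtype.val '' Z : Set K) :=
        (hZclopen.isClosed.isCompact).image continuous_subtype_val
      have hZccl : IsClosed (Subtype.val '' Zᶜ : Set K) :=
        (((hZclopen.compl).isClosed.isCompact).image continuous_subtype_val).isClosed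
      have hdisj : (Subtype.val '' Z : Set K) ⊆ (Subtype.val '' Zᶜ)ᶜ := by
        rintro w ⟨u, huZ, rfl⟩ ⟨v, hvZ, hvu⟩
        refine hvZ ?_
        rw [show v = u from Subtype.val_injective hvu]
        exact huZ
      obtain ⟨ε, hεpos, hεsub⟩ :=
        hZcompact.exists_thickening_subset_open hZccl.isOpen_compl hdisj
      refine ⟨ε, hεpos, fun _ => ⟨Z, hZclopen, hxiZ, hxjZ, ?_⟩⟩
      intro u v huZ hvZ
      by_contra hlt
      push_neg at hlt
      have hmem : (v : K) ∈ Metric.thickening ε (Subtype.val '' Z) :=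
        Metric.mem_thickening_iff.2 ⟨u, ⟨u, huZ, rfl⟩, by rwa [dist_comm]⟩
      exact (hεsub hmem) ⟨v, hvZ, rfl⟩
    choose ε hεpos hεsep using hpair
    -- a uniform positive gap
    haveI : Nonempty (Fin k) := ⟨⟨0, hkpos⟩⟩
    obtain ⟨q₀, -, hmin⟩ := (Finset.univ : Finset (Fin k × Fin k)).exists_min_image
      (fun q => ε q.1 q.2) ⟨(⟨0, hkpos⟩, ⟨0, hkpos⟩), Finset.mem_univ _⟩
    set ε₀ : ℝ := ε q₀.1 q₀.2 with hε₀def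
    have hε₀ : 0 < ε₀ := hεpos _ _
    have hε₀le : ∀ i j : Fin k, ε₀ ≤ ε i j := fun i j => hmin (i, j) (Finset.mem_univ _)
    obtain ⟨n, hn⟩ := exists_nat_gt (5 / ε₀)
    have hδn : 5 * δ n < ε₀ := by
      have h1 : (0 : ℝ) < (n : ℝ) + 1 := by positivity
      have h2 : 5 / ε₀ < (n : ℝ) + 1 := lt_trans hn (lt_add_one _)
      have h3 : 5 < ((n : ℝ) + 1) * ε₀ := (div_lt_iff₀ hε₀).1 h2
      have : 5 * δ n = 5 / ((n : ℝ) + 1) := by simp only [hδ]; ring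
      rw [this, div_lt_iff₀ h1]
      linarith
    -- the k chosen points lie in distinct components of `W n p`
    set y : Fin k → ↥(W n p) := fun i => ⟨(x i).1, hfibW n p (x i).2⟩ with hy
    have hkcard : (k : ℕ∞) ≤ ENat.card (ConnectedComponents ↥(W n p)) := by
      rw [natCast_le_enatCard_iff]
      refine ⟨⟨fun i => ConnectedComponents.mk (y i), ?_⟩⟩
      intro i j hij'
      by_contra hne'
      obtain ⟨Z, hZclopen, hxiZ, hxjZ, hgap⟩ := hεsep i j hne'
      set A : Set K := Subtype.val '' Z with hA
      set B : Set K := Subtype.val '' Zᶜ with hB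
      have hgap' : ∀ a ∈ A, ∀ b ∈ B, ε i j ≤ dist a b := by
        rintro a2 ⟨u, hu, rfl⟩ b2 ⟨v, hv, rfl⟩
        exact hgap u v hu hv
      -- classify balls into those meeting A and the rest
      set VA : Finset K := (V n p).filter (fun t => (closedBall t (δ n) ∩ A).Nonempty) with hVA
      set WA : Set K := ⋃ t ∈ VA, closedBall t (δ n) with hWA
      set WB : Set K := ⋃ t ∈ (V n p) \ VA, closedBall t (δ n) with hWB
      have hWsplit : W n p = WA ∪ WB := by
        apply Subset.antisymm
        · intro z hz
          rw [hW] at hz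
          obtain ⟨t, ht, hzt⟩ := mem_iUnion₂.1 hz
          by_cases hA' : (closedBall t (δ n) ∩ A).Nonempty
          · refine Or.inl ?_
            rw [hWA]
            exact mem_iUnion₂.2 ⟨t, Finset.mem_filter.2 ⟨ht, hA'⟩, hzt⟩
          · refine Or.inr ?_
            rw [hWB]
            exact mem_iUnion₂.2 ⟨t, Finset.mem_sdiff.2
              ⟨ht, fun hmem => hA' (Finset.mem_filter.1 hmem).2⟩, hzt⟩
        · intro z hz
          rw [hW]
          rcases hz with hz | hz
          · rw [hWA] at hz
            obtain ⟨t, ht, hzt⟩ := mem_iUnion₂.1 hz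
            exact mem_iUnion₂.2 ⟨t, (Finset.mem_filter.1 ht).1, hzt⟩
          · rw [hWB] at hz
            obtain ⟨t, ht, hzt⟩ := mem_iUnion₂.1 hz
            exact mem_iUnion₂.2 ⟨t, (Finset.mem_sdiff.1 ht).1, hzt⟩
      have hWAcl : IsClosed WA := by
        rw [hWA]
        exact Set.Finite.isClosed_biUnion (VA.finite_toSet) fun t _ => isClosed_closedBall
      have hWBcl : IsClosed WB := by
        rw [hWB]
        exact Set.Finite.isClosed_biUnion (((V n p) \ VA).finite_toSet)
          fun t _ => isClosed_closedBall
      -- the two halves are disjoint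
      have hdisjW : ∀ z : K, z ∈ WA → z ∈ WB → False := by
        intro z hzA hzB
        rw [hWA] at hzA
        rw [hWB] at hzB
        obtain ⟨t, htVA, hzt⟩ := mem_iUnion₂.1 hzA
        obtain ⟨t', ht', hzt'⟩ := mem_iUnion₂.1 hzB
        have htVA' := htVA
        simp only [hVA, Finset.mem_filter] at htVA'
        obtain ⟨a2, hacb, haA⟩ := htVA'.2
        have ht'V := (Finset.mem_sdiff.1 ht').1
        have ht'nA := (Finset.mem_sdiff.1 ht').2
        have hmeet : p ∈ f '' closedBall t' (δ n) := by
          have := ht'V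
          simp only [hV, Finset.mem_filter] at this
          exact this.2
        obtain ⟨xt, hxtcb, hxtp⟩ := hmeet
        have hxtfib : xt ∈ f ⁻¹' {p} := by simp [hxtp]
        have hxtB : xt ∈ B := by
          by_cases hcase : (⟨xt, hxtfib⟩ : ↥(f ⁻¹' {p})) ∈ Z
          · exfalso
            apply ht'nA
            simp only [hVA, Finset.mem_filter]
            exact ⟨ht'V, ⟨xt, hxtcb, ⟨⟨xt, hxtfib⟩, hcase, rfl⟩⟩⟩
          · exact ⟨⟨xt, hxtfib⟩, hcase, rfl⟩
        have hd1 : dist a2 t ≤ δ n := mem_closedBall.1 hacb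
        have hd2 : dist z t ≤ δ n := mem_closedBall.1 hzt
        have hd3 : dist z t' ≤ δ n := mem_closedBall.1 hzt'
        have hd4 : dist xt t' ≤ δ n := mem_closedBall.1 hxtcb
        have htri : dist a2 xt ≤ 4 * δ n := by
          have t1 := dist_triangle a2 z xt
          have t2 := dist_triangle a2 t z
          have t3 := dist_triangle z t' xt
          have c1 : dist t z = dist z t := dist_comm t z
          have c2 : dist t' xt = dist xt t' := dist_comm t' xt
          linarith
        have hge : ε i j ≤ dist a2 xt := hgap' a2 haA xt hxtB
        have := hε₀le i j
        linarith [hδpos n]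
      -- y i lies in WA
      have hyiWA : ((y i : ↥(W n p)) : K) ∈ WA := by
        obtain ⟨t, ht, hxt⟩ := hsubW n p (x i).1 (x i).2
        have htVA : t ∈ VA := Finset.mem_filter.2 ⟨ht, ⟨(x i).1, hxt, ⟨x i, hxiZ, rfl⟩⟩⟩
        rw [hWA]
        exact mem_iUnion₂.2 ⟨t, htVA, hxt⟩
      -- y j lies in WB
      have hyjWB : ((y j : ↥(W n p)) : K) ∈ WB := by
        obtain ⟨t', ht', hxt'⟩ := hsubW n p (x j).1 (x j).2
        have ht'WB : t' ∈ (V n p) \ VA := by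
          rw [Finset.mem_sdiff]
          refine ⟨ht', fun hmem => ?_⟩
          obtain ⟨a2, hacb, haA⟩ := (Finset.mem_filter.1 hmem).2
          have hxjB : ((x j : K)) ∈ B := ⟨x j, hxjZ, rfl⟩
          have hge : ε i j ≤ dist a2 (x j : K) := hgap' a2 haA _ hxjB
          have hd1 : dist a2 t' ≤ δ n := mem_closedBall.1 hacb
          have hd2 : dist (x j : K) t' ≤ δ n := mem_closedBall.1 hxt'
          have htri : dist a2 (x j : K) ≤ 2 * δ n := by
            have t1 := dist_triangle a2 t' (x j : K)
            have c1 : dist t' (x j : K) = dist (x j : K) t' := dist_comm _ _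
            linarith
          have := hε₀le i j
          linarith [hδpos n]
        rw [hWB]
        exact mem_iUnion₂.2 ⟨t', ht'WB, hxt'⟩
      -- contradiction with connectedness
      have hyjC : y j ∈ connectedComponent (y i) :=
        ConnectedComponents.coe_eq_coe'.1 hij'.symm
      have hCpre : IsPreconnected (Subtype.val '' connectedComponent (y i) : Set K) :=
        isPreconnected_connectedComponent.image _ continuous_subtype_val.continuousOn
      have hsubU : (Subtype.val '' connectedComponent (y i) : Set K) ⊆ WA ∪ WB := by
        rintro z2 ⟨z, -, rfl⟩
        rw [← hWsplit]
        exact z.2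
      obtain ⟨z, hz1, hz2, hz3⟩ := isPreconnected_closed_iff.1 hCpre WA WB hWAcl hWBcl hsubU
        ⟨(y i : K), ⟨y i, mem_connectedComponent, rfl⟩, hyiWA⟩
        ⟨(y j : K), ⟨y j, hyjC, rfl⟩, hyjWB⟩
      exact hdisjW z hz2 hz3
    refine le_trans ?_ (le_iSup (fun n => M n p) n)
    simp only [hM]
    calc ((k : ℕ) : ℝ≥0∞) = ((k : ℕ∞) : ℝ≥0∞) := by norm_cast
    _ ≤ _ := ENat.toENNReal_le.2 hkcard
  -- each approximation is measurable
  have hMmeas : ∀ n, Measurable (M n) := by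
    intro n
    have hcb : ∀ t : K, MeasurableSet (f '' closedBall t (δ n)) := fun t =>
      ((isClosed_closedBall.isCompact).image hf).isClosed.measurableSet
    have hpat : ∀ s : Finset K, MeasurableSet {p : ℂ | V n p = s} := by
      intro s
      by_cases hs : s ⊆ T n
      · have heq : {p : ℂ | V n p = s} =
            (⋂ t ∈ s, f '' closedBall t (δ n)) ∩ ⋂ t ∈ (T n) \ s, (f '' closedBall t (δ n))ᶜ := by
          ext p
          simp only [mem_setOf_eq, mem_inter_iff, mem_iInter, mem_compl_iff, Finset.mem_sdiff, hV]
          constructor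
          · intro hVs
            constructor
            · intro t ht
              have : t ∈ (T n).filter fun t => p ∈ f '' closedBall t (δ n) := hVs ▸ ht
              exact (Finset.mem_filter.1 this).2
            · rintro t ⟨htT, hts⟩ hmem
              exact hts (hVs ▸ Finset.mem_filter.2 ⟨htT, hmem⟩)
          · rintro ⟨h1, h2⟩
            apply Finset.ext
            intro t
            rw [Finset.mem_filter]
            constructor
            · rintro ⟨htT, hmem⟩
              by_contra hts
              exact h2 t ⟨htT, hts⟩ hmem
            · intro hts
              exact ⟨hs hts, h1 t hts⟩
        rw [heq]
        exact (MeasurableSet.biInter (s.countable_toSet) fun t _ => hcb t).inter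
          (MeasurableSet.biInter (((T n) \ s).countable_toSet) fun t _ => (hcb t).compl)
      · have heq : {p : ℂ | V n p = s} = ∅ := by
          ext p
          simp only [mem_setOf_eq, mem_empty_iff_false, iff_false]
          intro h
          exact hs (h ▸ Finset.filter_subset _ _)
        rw [heq]
        exact MeasurableSet.empty
    set g : Finset K → ℝ≥0∞ :=
      fun s => (ENat.card (ConnectedComponents ↥(⋃ t ∈ s, closedBall t (δ n))) : ℝ≥0∞) with hg
    have hrep : M n = fun p => ∑ s ∈ (T n).powerset,
        Set.indicator {q : ℂ | V n q = s} (fun _ => g s) p := by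
      funext p
      rw [Finset.sum_eq_single_of_mem (V n p)
        (Finset.mem_powerset.2 (by simp only [hV]; exact Finset.filter_subset _ _))]
      · rw [Set.indicator_of_mem (show p ∈ {q : ℂ | V n q = V n p} from rfl)]
      · intro s hs hne
        exact Set.indicator_of_notMem (fun h => hne (h : V n p = s).symm) _
    rw [hrep]
    exact Finset.measurable_sum _ fun s _ => (measurable_const.indicator (hpat s))
  have hfinal : (fun p : ℂ => ((ENat.card (ConnectedComponents ↥(f ⁻¹' {p}))) : ℝ≥0∞))
      = fun p => ⨆ n, M n p := by
    funext p
    exact le_antisymm (hEle p) (iSup_le fun n => hMle n p)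
  rw [hfinal]
  exact Measurable.iSup fun n => hMmeas n

/-! ### The concatenated homotopy -/

variable {a b : ℂ} {γ₁ γ₂ γ₃ : Path a b}

lemma measurable_homE (H : Path.Homotopy γ₁ γ₂) :
    Measurable fun p => ((homE H p : ℝ≥0∞)) :=
  measurable_card_fiber (fun x r => isPreconnected_closedBall_I2 x r) H.continuous

lemma homE_trans_le (H₁ : Path.Homotopy γ₁ γ₂) (H₂ : Path.Homotopy γ₂ γ₃) (p : ℂ) :
    homE (H₁.trans H₂) p ≤ homE H₁ p + homE H₂ p := by
  have hmem1 : ∀ s : I, (s : ℝ) / 2 ∈ I := fun s => ⟨by linarith [s.2.1], by linarith [s.2.2]⟩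
  have hmem2 : ∀ s : I, ((s : ℝ) + 1) / 2 ∈ I :=
    fun s => ⟨by linarith [s.2.1], by linarith [s.2.2]⟩
  have hg1 : ∀ x : I × I, ⇑H₁ x = p →
      ⇑(H₁.trans H₂) ((⟨(x.1 : ℝ) / 2, hmem1 x.1⟩ : I), x.2) = p := by
    intro x hx
    rw [Path.Homotopy.trans_apply]
    rw [dif_pos (show ((⟨(x.1 : ℝ) / 2, hmem1 x.1⟩ : I) : ℝ) ≤ 1 / 2 by
      show (x.1 : ℝ) / 2 ≤ 1 / 2; linarith [x.1.2.2])]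
    convert hx using 2
    exact Prod.ext (Subtype.ext (by push_cast; ring)) rfl
  have hg2 : ∀ x : I × I, ⇑H₂ x = p →
      ⇑(H₁.trans H₂) ((⟨((x.1 : ℝ) + 1) / 2, hmem2 x.1⟩ : I), x.2) = p := by
    intro x hx
    rw [Path.Homotopy.trans_apply]
    by_cases h : ((⟨((x.1 : ℝ) + 1) / 2, hmem2 x.1⟩ : I) : ℝ) ≤ 1 / 2
    · rw [dif_pos h]
      have hx10 : (x.1 : ℝ) = 0 := by
        have : ((x.1 : ℝ) + 1) / 2 ≤ 1 / 2 := h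
        have := x.1.2.1
        linarith
      have hx1 : x.1 = (0 : I) := Subtype.ext hx10
      have hx' : ⇑H₂ ((0 : I), x.2) = p := by
        rw [show ((0 : I), x.2) = x from Prod.ext hx1.symm rfl]
        exact hx
      have h10 : ⇑H₁ ((1 : I), x.2) = p := by
        have e1 : ⇑H₁ ((1 : I), x.2) = γ₂ x.2 := H₁.toHomotopy.apply_one x.2
        have e2 : ⇑H₂ ((0 : I), x.2) = γ₂ x.2 := H₂.toHomotopy.apply_zero x.2
        rw [e1, ← e2]; exact hx'
      convert h10 using 2
      refine Prod.ext (Subtype.ext ?_) rfl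
      show 2 * (((x.1 : ℝ) + 1) / 2) = ((1 : I) : ℝ)
      rw [hx10]; norm_num
    · rw [dif_neg h]
      convert hx using 2
      exact Prod.ext (Subtype.ext (by push_cast; ring)) rfl
  refine card_cc_le_add
    (f := fun x : ↥(⇑H₁ ⁻¹' {p}) =>
      (⟨((⟨(x.1.1 : ℝ) / 2, hmem1 x.1.1⟩ : I), x.1.2), hg1 x.1 x.2⟩ :
        ↥(⇑(H₁.trans H₂) ⁻¹' {p})))
    (g := fun x : ↥(⇑H₂ ⁻¹' {p}) =>
      (⟨((⟨((x.1.1 : ℝ) + 1) / 2, hmem2 x.1.1⟩ : I), x.1.2), hg2 x.1 x.2⟩ :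
        ↥(⇑(H₁.trans H₂) ⁻¹' {p})))
    ?_ ?_ ?_
  · exact (((continuous_subtype_val.fst.subtype_val.div_const 2).subtype_mk _).prodMk
      continuous_subtype_val.snd).subtype_mk _
  · have : Continuous fun x : ↥(⇑H₂ ⁻¹' {p}) => ((x.1.1 : ℝ) + 1) / 2 :=
      ((continuous_subtype_val.fst.subtype_val.add continuous_const).div_const 2)
    exact ((this.subtype_mk _).prodMk continuous_subtype_val.snd).subtype_mk _
  · rintro ⟨⟨s, u⟩, hmem⟩
    have hsp : ⇑(H₁.trans H₂) (s, u) = p := hmem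
    rw [Path.Homotopy.trans_apply] at hsp
    by_cases h : (s : ℝ) ≤ 1 / 2
    · rw [dif_pos h] at hsp
      left
      refine ⟨⟨(⟨2 * (s : ℝ), (unitInterval.mul_pos_mem_iff zero_lt_two).2 ⟨s.2.1, h⟩⟩, u),
        hsp⟩, ?_⟩
      apply congrArg ConnectedComponents.mk
      apply Subtype.ext
      exact Prod.ext (Subtype.ext (by push_cast; ring)) rfl
    · rw [dif_neg h] at hsp
      right
      refine ⟨⟨(⟨2 * (s : ℝ) - 1, unitInterval.two_mul_sub_one_mem_iff.2
        ⟨(not_le.1 h).le, s.2.2⟩⟩, u), hsp⟩, ?_⟩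
      apply congrArg ConnectedComponents.mk
      apply Subtype.ext
      exact Prod.ext (Subtype.ext (by push_cast; ring)) rfl

lemma homArea_trans_le (H₁ : Path.Homotopy γ₁ γ₂) (H₂ : Path.Homotopy γ₂ γ₃) :
    homArea (H₁.trans H₂) ≤ homArea H₁ + homArea H₂ := by
  rw [homArea, homArea, homArea, ← lintegral_add_left (measurable_homE H₁)]
  apply lintegral_mono
  intro p
  show (homE (H₁.trans H₂) p : ℝ≥0∞) ≤ (homE H₁ p : ℝ≥0∞) + (homE H₂ p : ℝ≥0∞)
  rw [← ENat.toENNReal_add]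
  exact ENat.toENNReal_le.2 (homE_trans_le H₁ H₂ p)

end MHAAux

/-- The minimum homotopy area satisfies the triangle inequality. -/
theorem stmt_5 {a b : ℂ} (γ₁ γ₂ γ₃ : Path a b) :
    minHomArea γ₁ γ₃ ≤ minHomArea γ₁ γ₂ + minHomArea γ₂ γ₃ := by
  simp only [minHomArea]
  rw [ENNReal.iInf_add]
  refine le_iInf fun H₁ => ?_
  rw [ENNReal.add_iInf]
  refine le_iInf fun H₂ => ?_
  exact (iInf_le _ (H₁.trans H₂)).trans (MHAAux.homArea_trans_le H₁ H₂)
end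
end

section
/- Let F : ℂ → ℂ be a positive immersion of the closed unit disk that is moreover C² on an open neighborhood of the disk, and let C(t) = F(exp(2πit)) be its boundary loop. Then C′(t) ≠ 0 for all t ∈ ℝ, and the Whitney index of C equals one: (1/(2πi)) ∫₀¹ C″(t)/C′(t) dt = 1. -/
open MeasureTheory unitInterval ENNReal

noncomputable section

/-- The restriction of a loop `C : ℝ → ℂ` (with `C 0 = C 1 = p`) to `[0,1]`,
as a `Path p p`. -/
def pathOfLoopAt (C : ℝ → ℂ) (p : ℂ) (hC : Continuous C) (h0 : C 0 = p) (h1 : C 1 = p) :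
    Path p p where
  toFun t := C t
  continuous_toFun := hC.comp continuous_subtype_val
  source' := by simpa using h0
  target' := by simpa using h1

open Classical in
/-- The winding number `wn(x, C) = (1/(2πi)) ∫₀¹ C′(t)/(C(t) − x) dt` of a loop `C`
about a point `x ∉ C(ℝ)`; it is defined to be `0` for `x ∈ C(ℝ)`. -/
def windingNumber (C : ℝ → ℂ) (x : ℂ) : ℂ :=
  if x ∈ Set.range C then 0
  else (1 / (2 * (Real.pi : ℂ) * Complex.I)) * ∫ t in (0:ℝ)..1, deriv C t / (C t - x)

/-- The winding area `W(C) = ∫⁻ x, ‖wn(x,C)‖`. -/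
def windArea (C : ℝ → ℂ) : ℝ≥0∞ :=
  ∫⁻ x, (‖windingNumber C x‖₊ : ℝ≥0∞)

/-- `F : ℂ → ℂ` is an immersion of the closed unit disk if it is `C¹` on an open
neighborhood of the disk and its real Fréchet derivative is injective at every
point of the disk. -/
def IsDiskImmersion (F : ℂ → ℂ) : Prop :=
  ∃ U : Set ℂ, IsOpen U ∧ Metric.closedBall (0:ℂ) 1 ⊆ U ∧ ContDiffOn ℝ 1 F U ∧
    ∀ z ∈ Metric.closedBall (0:ℂ) 1, Function.Injective (fderiv ℝ F z)

/-- A positive immersion of the closed unit disk: additionally the determinant of the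
real derivative is positive at every point of the disk. -/
def IsPosDiskImmersion (F : ℂ → ℂ) : Prop :=
  ∃ U : Set ℂ, IsOpen U ∧ Metric.closedBall (0:ℂ) 1 ⊆ U ∧ ContDiffOn ℝ 1 F U ∧
    ∀ z ∈ Metric.closedBall (0:ℂ) 1,
      Function.Injective (fderiv ℝ F z) ∧ 0 < LinearMap.det (fderiv ℝ F z).toLinearMap

namespace S14

def cc : ℂ := 2 * (Real.pi : ℂ) * Complex.I
def zf (t : ℝ) : ℂ := Complex.exp (cc * t)

lemma cc_ne : cc ≠ 0 := by
  simp [cc, Real.pi_ne_zero, Complex.I_ne_zero, Complex.ofReal_ne_zero]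

lemma conj_cc : (starRingEnd ℂ) cc = -cc := by
  simp only [cc, map_mul, Complex.conj_I, Complex.conj_ofReal, map_ofNat]; ring

lemma norm_zf (t : ℝ) : ‖zf t‖ = 1 := by
  have : zf t = Complex.exp ((2 * Real.pi * t : ℝ) * Complex.I) := by
    unfold zf cc; push_cast; ring_nf
  rw [this, Complex.norm_exp_ofReal_mul_I]

lemma zf_ne (t : ℝ) : zf t ≠ 0 := by
  intro h; have := norm_zf t; rw [h] at this; simp at this

lemma conj_zf_mul (t : ℝ) : (starRingEnd ℂ) (zf t) * zf t = 1 := by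
  have := Complex.mul_conj (zf t)
  rw [mul_comm] at this
  rw [this, Complex.normSq_eq_norm_sq]
  norm_cast
  rw [norm_zf]; norm_num

lemma hasDerivAt_zf (t : ℝ) : HasDerivAt zf (cc * zf t) t := by
  have h1 : HasDerivAt (fun w : ℂ => Complex.exp (cc * w)) (Complex.exp (cc * t) * cc) (t : ℂ) := by
    exact ((Complex.hasDerivAt_exp (cc * t)).comp (t : ℂ) ((hasDerivAt_id (t : ℂ)).const_mul cc)).congr_deriv (by simp)
  have := h1.comp_ofReal
  exact this.congr_deriv (by simp only [zf]; ring)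

lemma zf_zero : zf 0 = 1 := by simp [zf]

lemma zf_one : zf 1 = 1 := by
  have : cc * ((1:ℝ):ℂ) = cc := by norm_num
  rw [zf, this, cc]
  exact Complex.exp_two_pi_mul_I

lemma contDiff_zf : ContDiff ℝ 1 zf := by
  have h1 : ContDiff ℝ 1 (fun t : ℝ => cc * (t : ℂ)) :=
    contDiff_const.mul Complex.ofRealCLM.contDiff
  exact Complex.contDiff_exp.comp h1

def af (F : ℂ → ℂ) (w : ℂ) : ℂ := (fderiv ℝ F w 1 - Complex.I * fderiv ℝ F w Complex.I) / 2
def bf (F : ℂ → ℂ) (w : ℂ) : ℂ := (fderiv ℝ F w 1 + Complex.I * fderiv ℝ F w Complex.I) / 2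

lemma fderiv_eq (F : ℂ → ℂ) (w v : ℂ) :
    fderiv ℝ F w v = af F w * v + bf F w * (starRingEnd ℂ) v := by
  have hv : v = (v.re : ℝ) • (1:ℂ) + (v.im : ℝ) • Complex.I := by
    simp [Complex.ext_iff]
  have hconj : (starRingEnd ℂ) v = (v.re:ℂ) - v.im * Complex.I := by
    simp [Complex.ext_iff]
  rw [hv, map_add, _root_.map_smul, _root_.map_smul]
  rw [← hv, hconj]
  set p := fderiv ℝ F w 1
  set q := fderiv ℝ F w Complex.I
  simp only [af, bf, Complex.real_smul]
  have h2 : v = (v.re:ℂ) + v.im * Complex.I := (Complex.re_add_im v).symm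
  linear_combination (v.im:ℂ) * q * Complex.I_sq + (-((p - Complex.I*q)/2)) * h2

lemma det_eq (F : ℂ → ℂ) (w : ℂ) :
    LinearMap.det (fderiv ℝ F w).toLinearMap = ‖af F w‖^2 - ‖bf F w‖^2 := by
  rw [← LinearMap.det_toMatrix Complex.basisOneI]
  simp only [Matrix.det_fin_two, LinearMap.toMatrix_apply, Complex.coe_basisOneI_repr,
    Complex.coe_basisOneI, Matrix.cons_val_zero, Matrix.cons_val_one, Matrix.head_cons,
    ContinuousLinearMap.coe_coe, af, bf, Complex.sq_norm,
    Complex.normSq_apply, Complex.div_re, Complex.div_im, Complex.sub_re, Complex.sub_im,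
    Complex.add_re, Complex.add_im, Complex.mul_re, Complex.mul_im, Complex.I_re, Complex.I_im,
    Complex.one_re, Complex.one_im, Complex.normSq_ofNat, Complex.re_ofNat, Complex.im_ofNat]
  ring

/-- The homotopy loop family. -/
def Lf (F : ℂ → ℂ) (p : ℝ × ℝ) : ℂ :=
  cc * (starRingEnd ℂ) (zf p.2) *
    (af F (p.1 • zf p.2) * (zf p.2)^2 - (p.1 : ℂ) * bf F (p.1 • zf p.2))

lemma Lf_periodic (F : ℂ → ℂ) (s : ℝ) : Lf F (s, 1) = Lf F (s, 0) := by
  unfold Lf; simp only [zf_one, zf_zero]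

lemma contDiffOn_af {F : ℂ → ℂ} {V : Set ℂ} (hVo : IsOpen V) (hFV : ContDiffOn ℝ 2 F V) :
    ContDiffOn ℝ 1 (af F) V ∧ ContDiffOn ℝ 1 (bf F) V := by
  have hD : ContDiffOn ℝ 1 (fderiv ℝ F) V := hFV.fderiv_of_isOpen hVo (by norm_num)
  have ev1 : ContDiffOn ℝ 1 (fun w => fderiv ℝ F w 1) V := hD.clm_apply contDiffOn_const
  have evI : ContDiffOn ℝ 1 (fun w => fderiv ℝ F w Complex.I) V := hD.clm_apply contDiffOn_const
  exact ⟨(ev1.sub (contDiffOn_const.mul evI)).div_const 2,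
    (ev1.add (contDiffOn_const.mul evI)).div_const 2⟩

theorem main (F : ℂ → ℂ) (V : Set ℂ) (hVo : IsOpen V) (hVb : Metric.closedBall (0:ℂ) 1 ⊆ V)
    (hFV : ContDiffOn ℝ 2 F V)
    (hdet : ∀ z ∈ Metric.closedBall (0:ℂ) 1, 0 < LinearMap.det (fderiv ℝ F z).toLinearMap) :
    (∀ t : ℝ, deriv (fun u : ℝ => F (zf u)) t ≠ 0) ∧
      (∫ t in (0:ℝ)..1, deriv (deriv (fun u : ℝ => F (zf u))) t / deriv (fun u : ℝ => F (zf u)) t)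
        = cc := by
  -- membership facts
  have hmemB : ∀ s : ℝ, s ∈ Set.Icc (0:ℝ) 1 → ∀ t : ℝ, s • zf t ∈ Metric.closedBall (0:ℂ) 1 := by
    intro s hs t
    rw [Metric.mem_closedBall, dist_zero_right, norm_smul, norm_zf, mul_one, Real.norm_eq_abs,
      _root_.abs_of_nonneg hs.1]
    exact hs.2
  -- |b| < |a| on the closed ball
  have hab : ∀ w ∈ Metric.closedBall (0:ℂ) 1, ‖bf F w‖ < ‖af F w‖ := by
    intro w hw
    have h := hdet w hw
    rw [det_eq] at h
    nlinarith [norm_nonneg (af F w), norm_nonneg (bf F w)]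
  set Ω : Set (ℝ × ℝ) := (fun p : ℝ × ℝ => p.1 • zf p.2) ⁻¹' V with hΩdef
  have hsmc : Continuous (fun p : ℝ × ℝ => p.1 • zf p.2) :=
    continuous_fst.smul (contDiff_zf.continuous.comp continuous_snd)
  have hΩo : IsOpen Ω := hVo.preimage hsmc
  have hΩmem : ∀ s ∈ Set.Icc (0:ℝ) 1, ∀ t : ℝ, (s, t) ∈ Ω := fun s hs t => hVb (hmemB s hs t)
  -- smoothness of Lf on Ω
  have hLsm : ContDiffOn ℝ 1 (Lf F) Ω := by
    have hz2 : ContDiff ℝ 1 (fun p : ℝ × ℝ => zf p.2) := contDiff_zf.comp contDiff_snd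
    have hconj : ContDiff ℝ 1 (fun p : ℝ × ℝ => (starRingEnd ℂ) (zf p.2)) :=
      Complex.conjCLE.contDiff.comp hz2
    have hsm : ContDiff ℝ 1 (fun p : ℝ × ℝ => p.1 • zf p.2) := contDiff_fst.smul hz2
    have haf : ContDiffOn ℝ 1 (fun p : ℝ × ℝ => af F (p.1 • zf p.2)) Ω :=
      (contDiffOn_af hVo hFV).1.comp hsm.contDiffOn (fun p hp => hp)
    have hbf : ContDiffOn ℝ 1 (fun p : ℝ × ℝ => bf F (p.1 • zf p.2)) Ω :=
      (contDiffOn_af hVo hFV).2.comp hsm.contDiffOn (fun p hp => hp)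
    have hre : ContDiff ℝ 1 (fun p : ℝ × ℝ => ((p.1 : ℝ) : ℂ)) :=
      Complex.ofRealCLM.contDiff.comp contDiff_fst
    exact ((contDiffOn_const.mul hconj.contDiffOn)).mul
      ((haf.mul ((hz2.pow 2).contDiffOn)).sub (hre.contDiffOn.mul hbf))
  set M : ℝ × ℝ → ℂ := fun p => fderiv ℝ (Lf F) p (0, 1) with hMdef
  have hMc : ContinuousOn M Ω :=
    (hLsm.continuousOn_fderiv_of_isOpen hΩo le_rfl).clm_apply continuousOn_const
  have hLt : ∀ p ∈ Ω, HasDerivAt (fun t => Lf F (p.1, t)) (M p) p.2 := by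
    intro p hp
    have hdiff : DifferentiableAt ℝ (Lf F) p :=
      (hLsm.differentiableOn (by norm_num)).differentiableAt (hΩo.mem_nhds hp)
    have h2 : HasDerivAt (fun t : ℝ => ((p.1, t) : ℝ × ℝ)) ((0:ℝ), (1:ℝ)) p.2 :=
      (hasDerivAt_const _ _).prodMk (hasDerivAt_id _)
    have := hdiff.hasFDerivAt.comp_hasDerivAt p.2 h2
    exact this
  -- nonvanishing
  have hne : ∀ s ∈ Set.Icc (0:ℝ) 1, ∀ t : ℝ, Lf F (s, t) ≠ 0 := by
    intro s hs t
    have hw := hab _ (hmemB s hs t)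
    have h3 : af F (s • zf t) * (zf t)^2 - (s:ℂ) * bf F (s • zf t) ≠ 0 := by
      intro h
      have heq : ‖af F (s • zf t) * (zf t)^2‖ = ‖(s:ℂ) * bf F (s • zf t)‖ := by
        rw [sub_eq_zero] at h; rw [h]
      rw [norm_mul, norm_pow, norm_zf, one_pow, mul_one, norm_mul] at heq
      have hs1 : ‖(s:ℂ)‖ ≤ 1 := by
        rw [Complex.norm_real, Real.norm_eq_abs, _root_.abs_of_nonneg hs.1]; exact hs.2
      nlinarith [norm_nonneg (bf F (s • zf t)), norm_nonneg ((s:ℂ))]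
    have hcz : (starRingEnd ℂ) (zf t) ≠ 0 := by
      simpa using zf_ne t
    exact mul_ne_zero (mul_ne_zero cc_ne hcz) h3
  -- the boundary loop derivative
  have hCd : ∀ t : ℝ, HasDerivAt (fun u : ℝ => F (zf u)) (Lf F (1, t)) t := by
    intro t
    have hzV : zf t ∈ V := hVb (by simpa using hmemB 1 (by norm_num) t)
    have hFz : HasFDerivAt F (fderiv ℝ F (zf t)) (zf t) :=
      ((hFV.differentiableOn (by norm_num)).differentiableAt (hVo.mem_nhds hzV)).hasFDerivAt
    have hcomp := hFz.comp_hasDerivAt t (hasDerivAt_zf t)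
    have heq : fderiv ℝ F (zf t) (cc * zf t) = Lf F (1, t) := by
      rw [fderiv_eq]
      unfold Lf
      simp only [one_smul, Complex.ofReal_one, map_mul, conj_cc]
      have hmul := conj_zf_mul t
      set z := zf t
      set a := af F z
      set b := bf F z
      linear_combination (-(cc * a * z)) * hmul
    rw [heq] at hcomp
    exact hcomp
  have hDC : deriv (fun u : ℝ => F (zf u)) = fun t => Lf F (1, t) :=
    funext fun t => (hCd t).deriv
  constructor
  · intro t
    rw [hDC]
    exact hne 1 (by norm_num) t
  -- the integrand
  set f : ℝ × ℝ → ℂ := fun p => M p / Lf F p with hfdef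
  have hfC : ∀ p : ℝ × ℝ, p.1 ∈ Set.Icc (0:ℝ) 1 → ContinuousAt f p := by
    intro p hp
    have hpΩ : p ∈ Ω := by
      have := hΩmem p.1 hp p.2; simpa using this
    exact ((hMc.continuousAt (hΩo.mem_nhds hpΩ)).div
      ((hLsm.continuousOn.continuousAt (hΩo.mem_nhds hpΩ)))
      (by have := hne p.1 hp p.2; simpa using this))
  set sg : ℝ → ℝ := fun s => max 0 (min 1 s) with hsgdef
  have hsgc : Continuous sg := continuous_const.max (continuous_const.min continuous_id)
  have hsgm : ∀ s, sg s ∈ Set.Icc (0:ℝ) 1 := by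
    intro s
    constructor
    · exact le_max_left _ _
    · exact max_le (by norm_num) (min_le_left _ _)
  have hsg0 : sg 0 = 0 := by norm_num [hsgdef]
  have hsg1 : sg 1 = 1 := by norm_num [hsgdef]
  have hgc : Continuous (Function.uncurry (fun s t : ℝ => f (sg s, t))) := by
    rw [continuous_iff_continuousAt]
    intro p
    have h2 : Continuous (fun p : ℝ × ℝ => ((sg p.1, p.2) : ℝ × ℝ)) :=
      (hsgc.comp continuous_fst).prodMk continuous_snd
    show ContinuousAt (fun p : ℝ × ℝ => f (sg p.1, p.2)) p
    exact (hfC _ (hsgm _)).comp h2.continuousAt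
  set J : ℝ → ℂ := fun s => ∫ t in (0:ℝ)..1, f (sg s, t) with hJdef
  have hJc : Continuous J :=
    intervalIntegral.continuous_parametric_intervalIntegral_of_continuous' hgc 0 1
  -- integer valuedness
  have hJint : ∀ s : ℝ, ∃ n : ℤ, J s = n * (2 * Real.pi * Complex.I) := by
    intro s
    set u := sg s with hu
    have hu01 : u ∈ Set.Icc (0:ℝ) 1 := hsgm s
    have hft : Continuous (fun t : ℝ => f (u, t)) := by
      rw [continuous_iff_continuousAt]
      intro t
      have h2 : Continuous (fun t : ℝ => ((u, t) : ℝ × ℝ)) := continuous_const.prodMk continuous_id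
      exact (hfC (u, t) hu01).comp h2.continuousAt
    set φ : ℝ → ℂ := fun τ => ∫ t in (0:ℝ)..τ, f (u, t) with hφdef
    have hφd : ∀ τ : ℝ, HasDerivAt φ (f (u, τ)) τ := by
      intro τ
      exact intervalIntegral.integral_hasDerivAt_right (hft.intervalIntegrable _ _)
        (hft.stronglyMeasurableAtFilter _ _) hft.continuousAt
    set ψ : ℝ → ℂ := fun τ => Complex.exp (-φ τ) * Lf F (u, τ) with hψdef
    have hψd : ∀ τ : ℝ, HasDerivAt ψ 0 τ := by
      intro τ
      have h1 : HasDerivAt (fun τ => Complex.exp (-φ τ)) (Complex.exp (-φ τ) * (-(f (u, τ)))) τ :=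
        ((hφd τ).neg).cexp
      have h2 : HasDerivAt (fun τ => Lf F (u, τ)) (M (u, τ)) τ := hLt (u, τ) (hΩmem u hu01 τ)
      have h3 := h1.mul h2
      refine h3.congr_deriv ?_
      have hLne := hne u hu01 τ
      have hf3 : f (u, τ) = M (u, τ) / Lf F (u, τ) := rfl
      rw [hf3]
      linear_combination (-(Complex.exp (-φ τ) * M (u, τ))) * mul_inv_cancel₀ hLne
    have hψc : ψ 1 = ψ 0 :=
      is_const_of_deriv_eq_zero (fun τ => (hψd τ).differentiableAt) (fun τ => (hψd τ).deriv) 1 0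
    have hψ0 : ψ 0 = Lf F (u, 0) := by
      rw [hψdef]
      simp [hφdef, intervalIntegral.integral_same]
    have hexp1 : Complex.exp (-φ 1) = 1 := by
      have hLne := hne u hu01 0
      have hψ1 : ψ 1 = Complex.exp (-φ 1) * Lf F (u, 0) := by
        rw [hψdef]; simp only [Lf_periodic]
      have heq2 : Complex.exp (-φ 1) * Lf F (u, 0) = 1 * Lf F (u, 0) := by
        rw [one_mul, ← hψ1, hψc, hψ0]
      exact mul_right_cancel₀ hLne heq2
    obtain ⟨n, hn⟩ := Complex.exp_eq_one_iff.1 hexp1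
    refine ⟨-n, ?_⟩
    have hJs : J s = φ 1 := rfl
    rw [hJs]
    push_cast
    linear_combination -hn
  -- value at 0
  have hJ0 : J 0 = cc := by
    have halt : (fun t : ℝ => Lf F (0, t)) = fun t : ℝ => cc * af F 0 * zf t := by
      funext t
      unfold Lf
      simp only [zero_smul, Complex.ofReal_zero, zero_mul, sub_zero]
      have hmul := conj_zf_mul t
      linear_combination (cc * af F 0 * zf t) * hmul
    have hM0 : ∀ t : ℝ, M (0, t) = cc * Lf F (0, t) := by
      intro t
      have h1 : HasDerivAt (fun t => Lf F ((0:ℝ), t)) (M (0, t)) t :=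
        hLt (0, t) (hΩmem 0 (by norm_num) t)
      rw [halt] at h1
      have h2 : HasDerivAt (fun t : ℝ => cc * af F 0 * zf t) (cc * af F 0 * (cc * zf t)) t :=
        (hasDerivAt_zf t).const_mul _
      have h3 := h2.unique h1
      rw [← h3]
      have h4 : Lf F (0, t) = cc * af F 0 * zf t := congrFun halt t
      rw [h4]; ring
    have hcongr : ∀ t : ℝ, f (sg 0, t) = cc := by
      intro t
      rw [hsg0]
      have hf3 : f ((0:ℝ), t) = M (0, t) / Lf F (0, t) := rfl
      rw [hf3, hM0 t]
      exact mul_div_cancel_right₀ _ (hne 0 (by norm_num) t)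
    have : J 0 = ∫ _t in (0:ℝ)..1, cc :=
      intervalIntegral.integral_congr (fun t _ => hcongr t)
    rw [this]
    simp
  -- constancy
  have hJ01 : J 1 = J 0 := by
    have h2piI : (2 * (Real.pi:ℂ) * Complex.I) ≠ 0 := cc_ne
    set r : ℝ → ℝ := fun s => (J s / (2 * (Real.pi:ℂ) * Complex.I)).re with hrdef
    have hrc : Continuous r := Complex.continuous_re.comp (hJc.div_const _)
    have hr_of : ∀ (s : ℝ) (n : ℤ), J s = n * (2 * Real.pi * Complex.I) → r s = n := by
      intro s n hn
      rw [hrdef]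
      simp only
      rw [hn, mul_div_assoc, div_self h2piI, mul_one]
      simp
    have hrint : ∀ s : ℝ, ∃ n : ℤ, r s = n := by
      intro s; obtain ⟨n, hn⟩ := hJint s; exact ⟨n, hr_of s n hn⟩
    obtain ⟨m0, hm0⟩ := hJint 0
    obtain ⟨m1, hm1⟩ := hJint 1
    have h0 : r 0 = m0 := hr_of 0 m0 hm0
    have h1 : r 1 = m1 := hr_of 1 m1 hm1
    have hmm : m0 = m1 := by
      by_contra hcne
      have key : ∀ c : ℝ, c ∈ Set.Icc (r 0) (r 1) ∪ Set.Icc (r 1) (r 0) → ∃ s, r s = c := by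
        intro c hc
        rcases hc with hc | hc
        · obtain ⟨s, _, hs⟩ := intermediate_value_Icc (by norm_num : (0:ℝ) ≤ 1) hrc.continuousOn hc
          exact ⟨s, hs⟩
        · obtain ⟨s, _, hs⟩ := intermediate_value_Icc' (by norm_num : (0:ℝ) ≤ 1) hrc.continuousOn hc
          exact ⟨s, hs⟩
      rcases lt_or_gt_of_ne hcne with hlt | hlt
      · have hcast : (m0:ℝ) + 1 ≤ m1 := by exact_mod_cast hlt
        obtain ⟨s, hs⟩ := key ((m0:ℝ) + 1/2) (Or.inl ⟨by rw [h0]; linarith, by rw [h1]; linarith⟩)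
        obtain ⟨m, hm⟩ := hrint s
        rw [hm] at hs
        have : (2*m : ℤ) = 2*m0 + 1 := by
          have : (2*m : ℝ) = 2*m0 + 1 := by linarith
          exact_mod_cast this
        omega
      · have hcast : (m1:ℝ) + 1 ≤ m0 := by exact_mod_cast hlt
        obtain ⟨s, hs⟩ := key ((m1:ℝ) + 1/2) (Or.inr ⟨by rw [h1]; linarith, by rw [h0]; linarith⟩)
        obtain ⟨m, hm⟩ := hrint s
        rw [hm] at hs
        have : (2*m : ℤ) = 2*m1 + 1 := by
          have : (2*m : ℝ) = 2*m1 + 1 := by linarith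
          exact_mod_cast this
        omega
    rw [hm0, hm1, hmm]
  -- conclusion
  have hfinal : (∫ t in (0:ℝ)..1,
      deriv (deriv (fun u : ℝ => F (zf u))) t / deriv (fun u : ℝ => F (zf u)) t) = J 1 := by
    rw [hJdef]
    apply intervalIntegral.integral_congr
    intro t _
    show deriv (deriv (fun u : ℝ => F (zf u))) t / deriv (fun u : ℝ => F (zf u)) t = f (sg 1, t)
    rw [hsg1]
    have h1 : deriv (deriv (fun u : ℝ => F (zf u))) t = M (1, t) := by
      rw [hDC]
      exact (hLt (1, t) (hΩmem 1 (by norm_num) t)).deriv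
    rw [h1, hDC]
  rw [hfinal, hJ01, hJ0]

end S14

/-- The boundary loop of a positively immersed disk (of class `C²`) is regular and has
Whitney index `1`. -/
theorem stmt_14 (F : ℂ → ℂ) (hF : IsPosDiskImmersion F)
    (hF2 : ∃ V : Set ℂ, IsOpen V ∧ Metric.closedBall (0:ℂ) 1 ⊆ V ∧ ContDiffOn ℝ 2 F V)
    (C : ℝ → ℂ)
    (hdef : C = fun t : ℝ => F (Complex.exp (2 * (Real.pi : ℂ) * Complex.I * t))) :
    (∀ t : ℝ, deriv C t ≠ 0) ∧
      (1 / (2 * (Real.pi : ℂ) * Complex.I)) *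
          ∫ t in (0:ℝ)..1, deriv (deriv C) t / deriv C t = 1 := by
  obtain ⟨U, hUo, hUb, hU1, hUdet⟩ := hF
  obtain ⟨V, hVo, hVb, hFV⟩ := hF2
  have hdet : ∀ z ∈ Metric.closedBall (0:ℂ) 1, 0 < LinearMap.det (fderiv ℝ F z).toLinearMap :=
    fun z hz => (hUdet z hz).2
  have hmain := S14.main F V hVo hVb hFV hdet
  have hCeq : C = fun t : ℝ => F (S14.zf t) := hdef
  rw [hCeq]
  refine ⟨hmain.1, ?_⟩
  rw [hmain.2]
  show (1 / (2 * (Real.pi : ℂ) * Complex.I)) * (2 * (Real.pi : ℂ) * Complex.I) = 1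
  exact one_div_mul_cancel S14.cc_ne
end
end

section
/- Let γ₁, γ₂ : [0,1] → ℂ be loops based at p₀ (i.e. γᵢ(0) = γᵢ(1) = p₀), and suppose the range of γ₁ is Lebesgue-null. Let γ₁·γ₂ denote the concatenated loop (γ₁·γ₂)(t) = γ₁(2t) for t ≤ 1/2 and γ₂(2t−1) for t ≥ 1/2. Then σ(γ₁·γ₂) ≤ σ(γ₁) + σ(γ₂), where σ of a loop denotes its minimum homotopy area to the constant path at p₀. -/
open MeasureTheory unitInterval ENNReal

noncomputable section

namespace StmtAux

open Set Function Topology TopologicalSpace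

/-! ### Cardinality lemmas -/

lemma enatCard_le_of_surjective {α β : Type} (f : α → β) (hf : Function.Surjective f) :
    ENat.card β ≤ ENat.card α :=
  OrderHomClass.mono Cardinal.toENat (Cardinal.mk_le_of_surjective hf)

lemma le_enatCard_of_injective {α : Type} {n : ℕ} (f : Fin n → α)
    (hf : Function.Injective f) : (n : ℕ∞) ≤ ENat.card α := by
  have h1 : (n : Cardinal) ≤ Cardinal.mk α := by
    simpa using Cardinal.mk_le_of_injective hf
  exact Cardinal.natCast_le_toENat_iff.mpr h1

lemma exists_injective_of_le_enatCard {α : Type} {n : ℕ}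
    (h : (n : ℕ∞) ≤ ENat.card α) : ∃ f : Fin n → α, Function.Injective f := by
  cases finite_or_infinite α with
  | inl hfin =>
      have hcard : n ≤ Nat.card α := by
        rw [ENat.card_eq_coe_natCard α] at h
        exact_mod_cast h
      refine ⟨fun i => (Finite.equivFin α).symm (Fin.castLE hcard i), fun i j hij => ?_⟩
      have h2 := (Finite.equivFin α).symm.injective hij
      rw [Fin.ext_iff] at h2 ⊢
      simpa using h2
  | inr hinf =>
      refine ⟨fun i => Infinite.natEmbedding α i.1, fun i j hij => ?_⟩
      exact Fin.ext ((Infinite.natEmbedding α).injective hij)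

lemma surjective_componentsMap {X Y : Type} [TopologicalSpace X] [TopologicalSpace Y]
    {f : X → Y} (hf : Continuous f) (hs : Function.Surjective f) :
    Function.Surjective hf.connectedComponentsMap := by
  intro c
  obtain ⟨y, rfl⟩ := ConnectedComponents.surjective_coe c
  obtain ⟨x, rfl⟩ := hs y
  exact ⟨ConnectedComponents.mk x, rfl⟩

lemma card_components_le_add_of_maps {Z X Y : Type} [TopologicalSpace Z] [TopologicalSpace X]
    [TopologicalSpace Y] {f : X → Z} {g : Y → Z} (hf : Continuous f) (hg : Continuous g)
    (hsurj : ∀ z : Z, (∃ x, f x = z) ∨ (∃ y, g y = z)) :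
    ENat.card (ConnectedComponents Z)
      ≤ ENat.card (ConnectedComponents X) + ENat.card (ConnectedComponents Y) := by
  have hc : Continuous (Sum.elim f g) := hf.sumElim hg
  have hsurj2 : Function.Surjective (Sum.elim f g) := by
    intro z
    rcases hsurj z with ⟨x, hx⟩ | ⟨y, hy⟩
    exacts [⟨Sum.inl x, hx⟩, ⟨Sum.inr y, hy⟩]
  calc ENat.card (ConnectedComponents Z) ≤ ENat.card (ConnectedComponents (X ⊕ Y)) :=
        enatCard_le_of_surjective _ (surjective_componentsMap hc hsurj2)
    _ ≤ _ := by
        rw [← ENat.card_sum]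
        refine enatCard_le_of_surjective
          (Sum.elim continuous_inl.connectedComponentsMap
            continuous_inr.connectedComponentsMap) ?_
        intro c
        obtain ⟨z, rfl⟩ := ConnectedComponents.surjective_coe c
        rcases z with x | y
        · exact ⟨Sum.inl (ConnectedComponents.mk x), rfl⟩
        · exact ⟨Sum.inr (ConnectedComponents.mk y), rfl⟩

/-! ### The glued homotopy -/

section Glue

variable {p₀ : ℂ} {γ₁ γ₂ : Path p₀ p₀}

/-- The homotopy of `γ₁.trans γ₂` to the constant path obtained by running `H₁` and `H₂`
in parallel. -/
def glue (H₁ : Path.Homotopy γ₁ (Path.refl p₀)) (H₂ : Path.Homotopy γ₂ (Path.refl p₀)) :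
    Path.Homotopy (γ₁.trans γ₂) (Path.refl p₀) :=
  (H₁.hcomp H₂).cast rfl Path.refl_trans_refl

lemma glue_apply (H₁ : Path.Homotopy γ₁ (Path.refl p₀)) (H₂ : Path.Homotopy γ₂ (Path.refl p₀))
    (z : I × I) :
    glue H₁ H₂ z = if (z.2 : ℝ) ≤ 1 / 2 then (H₁.eval z.1).extend (2 * z.2)
      else (H₂.eval z.1).extend (2 * z.2 - 1) := rfl

lemma half_mem (u : I) : (u : ℝ) / 2 ∈ I :=
  ⟨by linarith [u.2.1], by linarith [u.2.2]⟩

lemma halfup_mem (u : I) : ((u : ℝ) + 1) / 2 ∈ I :=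
  ⟨by linarith [u.2.1], by linarith [u.2.2]⟩

lemma glue_left (H₁ : Path.Homotopy γ₁ (Path.refl p₀)) (H₂ : Path.Homotopy γ₂ (Path.refl p₀))
    (s u : I) : glue H₁ H₂ (s, ⟨(u : ℝ) / 2, half_mem u⟩) = H₁ (s, u) := by
  rw [glue_apply]
  rw [if_pos (show ((⟨(u : ℝ) / 2, half_mem u⟩ : I) : ℝ) ≤ 1 / 2 by
    change (u : ℝ) / 2 ≤ 1 / 2; linarith [u.2.2])]
  rw [show (2 * ((⟨(u : ℝ) / 2, half_mem u⟩ : I) : ℝ)) = ((u : I) : ℝ) by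
    change 2 * ((u : ℝ) / 2) = (u : ℝ); ring]
  rw [Path.extend_extends' (H₁.eval s) u]
  rfl

lemma glue_right (H₁ : Path.Homotopy γ₁ (Path.refl p₀)) (H₂ : Path.Homotopy γ₂ (Path.refl p₀))
    (s u : I) : glue H₁ H₂ (s, ⟨((u : ℝ) + 1) / 2, halfup_mem u⟩) = H₂ (s, u) := by
  rw [glue_apply]
  by_cases h0 : (u : ℝ) = 0
  · have hu : u = 0 := Subtype.ext h0
    subst hu
    rw [if_pos (show ((⟨(((0 : I) : ℝ) + 1) / 2, halfup_mem 0⟩ : I) : ℝ) ≤ 1 / 2 by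
      change (((0 : I) : ℝ) + 1) / 2 ≤ 1 / 2
      norm_num)]
    rw [show (2 * ((⟨(((0 : I) : ℝ) + 1) / 2, halfup_mem 0⟩ : I) : ℝ)) = (1 : ℝ) by
      change 2 * ((((0 : I) : ℝ) + 1) / 2) = 1
      norm_num]
    rw [Path.extend_one]
    exact (Path.Homotopy.source H₂ s).symm
  · have h0' : 0 < (u : ℝ) := lt_of_le_of_ne u.2.1 (Ne.symm h0)
    rw [if_neg (show ¬ ((⟨((u : ℝ) + 1) / 2, halfup_mem u⟩ : I) : ℝ) ≤ 1 / 2 by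
      change ¬ ((u : ℝ) + 1) / 2 ≤ 1 / 2; push_neg; linarith)]
    rw [show (2 * ((⟨((u : ℝ) + 1) / 2, halfup_mem u⟩ : I) : ℝ) - 1) = ((u : I) : ℝ) by
      change 2 * (((u : ℝ) + 1) / 2) - 1 = (u : ℝ); ring]
    rw [Path.extend_extends' (H₂.eval s) u]
    rfl

lemma homE_glue_le (H₁ : Path.Homotopy γ₁ (Path.refl p₀)) (H₂ : Path.Homotopy γ₂ (Path.refl p₀))
    (x : ℂ) : homE (glue H₁ H₂) x ≤ homE H₁ x + homE H₂ x := by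
  classical
  let f : ↥(⇑H₁ ⁻¹' {x}) → ↥(⇑(glue H₁ H₂) ⁻¹' {x}) := fun a =>
    ⟨(a.1.1, ⟨(a.1.2 : ℝ) / 2, half_mem _⟩), by
      simp only [Set.mem_preimage, Set.mem_singleton_iff]
      rw [glue_left]
      exact a.2⟩
  let g : ↥(⇑H₂ ⁻¹' {x}) → ↥(⇑(glue H₁ H₂) ⁻¹' {x}) := fun a =>
    ⟨(a.1.1, ⟨((a.1.2 : ℝ) + 1) / 2, halfup_mem _⟩), by
      simp only [Set.mem_preimage, Set.mem_singleton_iff]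
      rw [glue_right]
      exact a.2⟩
  have hf : Continuous f := by
    refine Continuous.subtype_mk ?_ _
    refine Continuous.prodMk (continuous_fst.comp continuous_subtype_val) ?_
    refine Continuous.subtype_mk ?_ _
    exact (continuous_subtype_val.comp
      ((continuous_snd.comp continuous_subtype_val))).div_const 2
  have hg : Continuous g := by
    refine Continuous.subtype_mk ?_ _
    refine Continuous.prodMk (continuous_fst.comp continuous_subtype_val) ?_
    refine Continuous.subtype_mk ?_ _
    exact ((continuous_subtype_val.comp
      ((continuous_snd.comp continuous_subtype_val))).add continuous_const).div_const 2
  have hsurj : ∀ z : ↥(⇑(glue H₁ H₂) ⁻¹' {x}), (∃ a, f a = z) ∨ (∃ b, g b = z) := by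
    rintro ⟨⟨s, t⟩, hz⟩
    have hz' : glue H₁ H₂ (s, t) = x := hz
    by_cases h : (t : ℝ) ≤ 1 / 2
    · left
      have h2 : (2 * (t : ℝ)) ∈ I := ⟨by linarith [t.2.1], by linarith⟩
      have heq : (⟨((⟨2 * (t : ℝ), h2⟩ : I) : ℝ) / 2, half_mem _⟩ : I) = t :=
        Subtype.ext (by change 2 * (t : ℝ) / 2 = (t : ℝ); ring)
      refine ⟨⟨(s, ⟨2 * (t : ℝ), h2⟩), ?_⟩, ?_⟩
      · simp only [Set.mem_preimage, Set.mem_singleton_iff]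
        have hgl := glue_left H₁ H₂ s ⟨2 * (t : ℝ), h2⟩
        rw [heq] at hgl
        rw [← hgl]
        exact hz'
      · apply Subtype.ext
        show (s, (⟨((⟨2 * (t : ℝ), h2⟩ : I) : ℝ) / 2, half_mem _⟩ : I)) = (s, t)
        exact congrArg (Prod.mk s) heq
    · right
      push_neg at h
      have h2 : (2 * (t : ℝ) - 1) ∈ I := ⟨by linarith, by linarith [t.2.2]⟩
      have heq : (⟨(((⟨2 * (t : ℝ) - 1, h2⟩ : I) : ℝ) + 1) / 2, halfup_mem _⟩ : I) = t :=
        Subtype.ext (by change (2 * (t : ℝ) - 1 + 1) / 2 = (t : ℝ); ring)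
      refine ⟨⟨(s, ⟨2 * (t : ℝ) - 1, h2⟩), ?_⟩, ?_⟩
      · simp only [Set.mem_preimage, Set.mem_singleton_iff]
        have hgr := glue_right H₁ H₂ s ⟨2 * (t : ℝ) - 1, h2⟩
        rw [heq] at hgr
        rw [← hgr]
        exact hz'
      · apply Subtype.ext
        show (s, (⟨(((⟨2 * (t : ℝ) - 1, h2⟩ : I) : ℝ) + 1) / 2, halfup_mem _⟩ : I)) = (s, t)
        exact congrArg (Prod.mk s) heq
  exact card_components_le_add_of_maps hf hg hsurj

end Glue

/-! ### Measurability of the fiber-component-counting function -/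

section Meas

variable {X : Type} [MetricSpace X] [CompactSpace X] [SecondCountableTopology X]

lemma measurableSet_image_ball {h : X → ℂ} (hc : Continuous h) (c : X) (r : ℝ) :
    MeasurableSet (h '' Metric.ball c r) := by
  have hball : Metric.ball c r = ⋃ n : ℕ, Metric.closedBall c (r - 1 / (n + 1)) := by
    ext y
    simp only [Metric.mem_ball, Metric.mem_closedBall, Set.mem_iUnion]
    constructor
    · intro hy
      obtain ⟨n, hn⟩ := exists_nat_one_div_lt (sub_pos.mpr hy)
      exact ⟨n, by linarith⟩
    · rintro ⟨n, hn⟩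
      have h1 : (0 : ℝ) < 1 / ((n : ℝ) + 1) := by positivity
      linarith
  rw [hball, Set.image_iUnion]
  exact MeasurableSet.iUnion fun n =>
    ((Metric.isClosed_closedBall.isCompact).image hc).isClosed.measurableSet

/-- The ball with rational radius centered at a point of `D`. -/
def Bl (D : Set X) (i : ↥D × ℚ) : Set X := Metric.ball (i.1 : X) (i.2 : ℝ)

/-- Finite unions of balls from the countable family. -/
def UU (D : Set X) (t : Finset (↥D × ℚ)) : Set X := ⋃ i ∈ t, Bl D i

lemma isOpen_UU (D : Set X) (t : Finset (↥D × ℚ)) : IsOpen (UU D t) :=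
  isOpen_biUnion fun _ _ => Metric.isOpen_ball

lemma measurableSet_image_UU {h : X → ℂ} (hc : Continuous h) (D : Set X)
    (t : Finset (↥D × ℚ)) : MeasurableSet (h '' UU D t) := by
  have himg : h '' UU D t = ⋃ i ∈ t, h '' Bl D i := by
    rw [UU, Set.image_iUnion₂]
  rw [himg]
  exact MeasurableSet.biUnion t.countable_toSet fun i _ => measurableSet_image_ball hc _ _

lemma exists_finset_balls {D : Set X} (hD : Dense D) {V O : Set X} (hV : IsCompact V)
    (hO : IsOpen O) (hVO : V ⊆ O) :
    ∃ t : Finset (↥D × ℚ), V ⊆ UU D t ∧ UU D t ⊆ O := by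
  classical
  have hpt : ∀ p ∈ V, ∃ i : ↥D × ℚ, p ∈ Bl D i ∧ Bl D i ⊆ O := by
    intro p hp
    obtain ⟨ε, hε, hball⟩ := Metric.isOpen_iff.mp hO p (hVO hp)
    obtain ⟨d, hdD, hd⟩ := hD.exists_dist_lt p (show (0 : ℝ) < ε / 4 by linarith)
    obtain ⟨qq, hq1, hq2⟩ := exists_rat_btwn (show ε / 4 < ε / 2 by linarith)
    refine ⟨(⟨d, hdD⟩, qq), ?_, ?_⟩
    · exact Metric.mem_ball.mpr (lt_trans hd hq1)
    · intro y hy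
      apply hball
      have hyd : dist y d < (qq : ℝ) := Metric.mem_ball.mp hy
      have htri : dist y p ≤ dist y d + dist d p := dist_triangle _ _ _
      have hdp : dist d p < ε / 4 := by rw [dist_comm]; exact hd
      exact Metric.mem_ball.mpr (by linarith)
  choose sel hsel1 hsel2 using hpt
  have hcov : V ⊆ ⋃ j : {j : ↥D × ℚ // Bl D j ⊆ O}, Bl D j.1 := by
    intro p hp
    exact Set.mem_iUnion.mpr ⟨⟨sel p hp, hsel2 p hp⟩, hsel1 p hp⟩
  obtain ⟨s, hs⟩ := hV.elim_finite_subcover (fun j : {j : ↥D × ℚ // Bl D j ⊆ O} => Bl D j.1)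
    (fun _ => Metric.isOpen_ball) hcov
  refine ⟨s.image Subtype.val, ?_, ?_⟩
  · intro p hp
    obtain ⟨j, hjs, hj⟩ := Set.mem_iUnion₂.mp (hs hp)
    exact Set.mem_biUnion (Finset.mem_image_of_mem _ hjs) hj
  · intro y hy
    obtain ⟨j, hjs, hj⟩ := Set.mem_iUnion₂.mp hy
    obtain ⟨j', _, rfl⟩ := Finset.mem_image.mp hjs
    exact j'.2 hj

lemma measurableSet_le_card (h : X → ℂ) (hc : Continuous h) (n : ℕ) (hn : 0 < n) :
    MeasurableSet {x : ℂ | (n : ℕ∞) ≤ ENat.card (ConnectedComponents ↥(h ⁻¹' {x}))} := by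
  classical
  obtain ⟨D, Dcnt, Ddense⟩ := exists_countable_dense X
  haveI : Countable ↥D := Dcnt.to_subtype
  have main : {x : ℂ | (n : ℕ∞) ≤ ENat.card (ConnectedComponents ↥(h ⁻¹' {x}))} =
      ⋃ (f : Fin n → Finset (↥D × ℚ))
        (_ : Pairwise fun i j => Disjoint (UU D (f i)) (UU D (f j))),
        ((⋂ i, h '' UU D (f i)) ∩ (h '' (⋃ i, UU D (f i))ᶜ)ᶜ) := by
    ext x
    simp only [Set.mem_setOf_eq, Set.mem_iUnion, Set.mem_inter_iff, Set.mem_iInter,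
      Set.mem_compl_iff, Set.mem_image, not_exists, not_and, exists_prop]
    constructor
    · -- hard direction
      intro hcard
      haveI hKcs : CompactSpace ↥(h ⁻¹' {x}) :=
        isCompact_iff_compactSpace.mp ((isClosed_singleton.preimage hc).isCompact)
      obtain ⟨κ, hκ⟩ := exists_injective_of_le_enatCard hcard
      choose q hq using fun i => ConnectedComponents.surjective_coe (κ i)
      have hsep : ∀ i j : Fin n, i ≠ j →
          ∃ Z : Set ↥(h ⁻¹' {x}), IsClopen Z ∧ q i ∈ Z ∧ q j ∉ Z := by
        intro i j hij
        have hne : connectedComponent (q i) ≠ connectedComponent (q j) := by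
          intro he
          apply hij
          apply hκ
          rw [← hq i, ← hq j, ConnectedComponents.coe_eq_coe]
          exact he
        have hnm : q j ∉ connectedComponent (q i) := fun hm =>
          hne (connectedComponent_eq hm)
        rw [connectedComponent_eq_iInter_isClopen] at hnm
        simp only [Set.mem_iInter, not_forall] at hnm
        obtain ⟨⟨Z, hZc, hZi⟩, hZj⟩ := hnm
        exact ⟨Z, hZc, hZi, hZj⟩
      choose Z hZclopen hZmem hZnot using hsep
      set Zd : Fin n → Fin n → Set ↥(h ⁻¹' {x}) := fun i j =>
        if hj : i = j then Set.univ else Z i j hj with hZd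
      set R : Fin n → Set ↥(h ⁻¹' {x}) := fun i => ⋂ j, Zd i j with hR
      have hZdclopen : ∀ i j, IsClopen (Zd i j) := by
        intro i j
        simp only [hZd]
        split_ifs
        exacts [isClopen_univ, hZclopen _ _ _]
      have hRclopen : ∀ i, IsClopen (R i) := fun i => isClopen_iInter_of_finite (hZdclopen i)
      have hqR : ∀ i, q i ∈ R i := by
        intro i
        refine Set.mem_iInter.mpr fun j => ?_
        simp only [hZd]
        split_ifs with hj
        · exact Set.mem_univ _
        · exact hZmem i j hj
      have hqnotR : ∀ i j, i ≠ j → q j ∉ R i := by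
        intro i j hij hmem
        have h1 := Set.mem_iInter.mp hmem j
        simp only [hZd, dif_neg hij] at h1
        exact hZnot i j hij h1
      set P : Fin n → Set ↥(h ⁻¹' {x}) := fun i =>
        R i ∩ ⋂ j : Fin n, (if (j : ℕ) < (i : ℕ) then (R j)ᶜ else Set.univ) with hP
      have hPclopen : ∀ i, IsClopen (P i) := by
        intro i
        refine (hRclopen i).inter (isClopen_iInter_of_finite fun j => ?_)
        split_ifs
        exacts [(hRclopen j).compl, isClopen_univ]
      have hqP : ∀ i, q i ∈ P i := by
        intro i
        refine ⟨hqR i, Set.mem_iInter.mpr fun j => ?_⟩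
        split_ifs with hji
        · exact hqnotR j i (fun hh => by subst hh; exact lt_irrefl _ hji)
        · exact Set.mem_univ _
      have hPsubR : ∀ i, P i ⊆ R i := fun i => Set.inter_subset_left
      have hPdisj : ∀ i j : Fin n, (i : ℕ) < (j : ℕ) → Disjoint (P i) (P j) := by
        intro i j hlt
        rw [Set.disjoint_left]
        intro a hai haj
        have h1 : a ∈ R i := hPsubR i hai
        have h2 := Set.mem_iInter.mp haj.2 i
        rw [if_pos hlt] at h2
        exact h2 h1
      have hPdisj' : ∀ i j : Fin n, i ≠ j → Disjoint (P i) (P j) := by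
        intro i j hij
        rcases lt_or_gt_of_ne (show (i : ℕ) ≠ (j : ℕ) from fun hh => hij (Fin.ext hh)) with
          hlt | hgt
        · exact hPdisj i j hlt
        · exact (hPdisj j i hgt).symm
      set i₀ : Fin n := ⟨0, hn⟩ with hi₀
      set P' : Fin n → Set ↥(h ⁻¹' {x}) := fun j => if j = i₀ then ∅ else P j with hP'
      set Q : Fin n → Set ↥(h ⁻¹' {x}) := fun i => if i = i₀ then (⋃ j, P' j)ᶜ else P i with hQ
      have hP'clopen : ∀ j, IsClopen (P' j) := by
        intro j
        simp only [hP']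
        split_ifs
        exacts [isClopen_empty, hPclopen j]
      have hQclopen : ∀ i, IsClopen (Q i) := by
        intro i
        simp only [hQ]
        split_ifs
        exacts [(isClopen_iUnion_of_finite hP'clopen).compl, hPclopen i]
      have hP'subP : ∀ j, P' j ⊆ P j := by
        intro j
        simp only [hP']
        split_ifs
        · exact Set.empty_subset _
        · exact le_rfl
      have hqQ : ∀ i, q i ∈ Q i := by
        intro i
        simp only [hQ]
        split_ifs with hi
        · subst hi
          intro hmem
          obtain ⟨j, hj⟩ := Set.mem_iUnion.mp hmem
          by_cases hji : j = i₀
          · rw [hji] at hj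
            simp only [hP', if_pos rfl] at hj
            exact hj
          · simp only [hP', if_neg hji] at hj
            exact hqnotR j i₀ hji (hPsubR j hj)
        · exact hqP i
      have hQdisj : ∀ i j, i ≠ j → Disjoint (Q i) (Q j) := by
        intro i j hij
        simp only [hQ]
        split_ifs with hi hj hj
        · exact absurd (hi.trans hj.symm) hij
        · rw [Set.disjoint_left]
          intro a ha haj
          apply ha
          refine Set.mem_iUnion.mpr ⟨j, ?_⟩
          simp only [hP', if_neg hj]
          exact haj
        · rw [Set.disjoint_right]
          intro a ha haj
          apply ha
          refine Set.mem_iUnion.mpr ⟨i, ?_⟩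
          simp only [hP', if_neg hi]
          exact haj
        · exact hPdisj' i j hij
      have hQcover : ∀ a : ↥(h ⁻¹' {x}), ∃ i, a ∈ Q i := by
        intro a
        by_cases ha : ∃ j, a ∈ P' j
        · obtain ⟨j, hj⟩ := ha
          have hj0 : j ≠ i₀ := by
            intro hh
            rw [hh] at hj
            simp only [hP', if_pos rfl] at hj
            exact hj
          refine ⟨j, ?_⟩
          simp only [hQ, if_neg hj0]
          have := hj
          simp only [hP', if_neg hj0] at this
          exact this
        · refine ⟨i₀, ?_⟩
          simp only [hQ, if_pos rfl]
          intro hmem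
          exact ha (Set.mem_iUnion.mp hmem)
      set V : Fin n → Set X := fun i => Subtype.val '' Q i with hV
      have hVcompact : ∀ i, IsCompact (V i) := fun i =>
        ((hQclopen i).1.isCompact).image continuous_subtype_val
      have hVdisj : ∀ i j, i ≠ j → Disjoint (V i) (V j) := fun i j hij =>
        Set.disjoint_image_of_injective Subtype.val_injective (hQdisj i j hij)
      have hKV : ∀ p : X, h p = x → p ∈ ⋃ i, V i := by
        intro p hp
        obtain ⟨i, hi⟩ := hQcover ⟨p, by simp [hp]⟩
        exact Set.mem_iUnion.mpr ⟨i, Set.mem_image_of_mem _ hi⟩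
      have hδex : ∀ i j : Fin n, ∃ δ : ℝ, 0 < δ ∧ (i ≠ j →
          Disjoint (Metric.thickening δ (V i)) (Metric.thickening δ (V j))) := by
        intro i j
        by_cases hij : i = j
        · exact ⟨1, one_pos, fun hh => absurd hij hh⟩
        · obtain ⟨δ, hδ0, hδd⟩ := (hVdisj i j hij).exists_thickenings (hVcompact i)
            (hVcompact j).isClosed
          exact ⟨δ, hδ0, fun _ => hδd⟩
      choose δ hδ0 hδd using hδex
      have hFinNe : (Finset.univ : Finset (Fin n × Fin n)).Nonempty :=
        ⟨(⟨0, hn⟩, ⟨0, hn⟩), Finset.mem_univ _⟩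
      set ε := Finset.univ.inf' hFinNe (fun p : Fin n × Fin n => δ p.1 p.2) with hε
      have hε0 : 0 < ε := (Finset.lt_inf'_iff hFinNe).mpr fun p _ => hδ0 p.1 p.2
      have hεle : ∀ i j, ε ≤ δ i j := fun i j =>
        Finset.inf'_le _ (Finset.mem_univ (i, j))
      have hOdisj : ∀ i j, i ≠ j →
          Disjoint (Metric.thickening ε (V i)) (Metric.thickening ε (V j)) := fun i j hij =>
        (hδd i j hij).mono (Metric.thickening_mono (hεle i j) _)
          (Metric.thickening_mono (hεle i j) _)
      have hsel : ∀ i, ∃ t : Finset (↥D × ℚ),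
          V i ⊆ UU D t ∧ UU D t ⊆ Metric.thickening ε (V i) := fun i =>
        exists_finset_balls Ddense (hVcompact i) Metric.isOpen_thickening
          (Metric.self_subset_thickening hε0 _)
      choose t ht1 ht2 using hsel
      refine ⟨t, fun i j hij => (hOdisj i j hij).mono (ht2 i) (ht2 j), ?_, ?_⟩
      · intro i
        exact ⟨(q i : X), ht1 i (Set.mem_image_of_mem _ (hqQ i)), (q i).2⟩
      · intro p hpc hpx
        obtain ⟨i, hi⟩ := Set.mem_iUnion.mp (hKV p hpx)
        exact hpc i (ht1 i hi)
    · -- easy direction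
      rintro ⟨f, hdisj, hmeet, hcov⟩
      have hfib : ∀ p : X, h p = x → p ∈ ⋃ i, UU D (f i) := by
        intro p hp
        by_contra hnot
        exact hcov p (fun i hi => hnot (Set.mem_iUnion.mpr ⟨i, hi⟩)) hp
      choose pm hpm hpx using hmeet
      have hmemK : ∀ i, pm i ∈ h ⁻¹' {x} := fun i => by simp [hpx i]
      have hinj : Function.Injective fun i : Fin n =>
          (ConnectedComponents.mk (⟨pm i, hmemK i⟩ : ↥(h ⁻¹' {x}))) := by
        intro i j hij
        by_contra hne
        have hclopen : IsClopen {a : ↥(h ⁻¹' {x}) | (a : X) ∈ UU D (f i)} := by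
          constructor
          · rw [← isOpen_compl_iff]
            have hcompl : {a : ↥(h ⁻¹' {x}) | (a : X) ∈ UU D (f i)}ᶜ =
                Subtype.val ⁻¹' (⋃ k, ⋃ (_ : k ≠ i), UU D (f k)) := by
              ext a
              simp only [Set.mem_compl_iff, Set.mem_setOf_eq, Set.mem_preimage, Set.mem_iUnion,
                exists_prop]
              constructor
              · intro hai
                obtain ⟨k, hk⟩ := Set.mem_iUnion.mp (hfib a.1 a.2)
                refine ⟨k, ?_, hk⟩
                intro hki
                rw [hki] at hk
                exact hai hk
              · rintro ⟨k, hki, hk⟩ hai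
                exact Set.disjoint_left.mp (hdisj hki) hk hai
            rw [hcompl]
            exact (isOpen_iUnion fun k => isOpen_iUnion fun _ => isOpen_UU D (f k)).preimage
              continuous_subtype_val
          · exact (isOpen_UU D (f i)).preimage continuous_subtype_val
        have h1 : (⟨pm j, hmemK j⟩ : ↥(h ⁻¹' {x})) ∈
            connectedComponent (⟨pm i, hmemK i⟩ : ↥(h ⁻¹' {x})) := by
          rw [ConnectedComponents.coe_eq_coe] at hij
          rw [hij]
          exact mem_connectedComponent
        have h2 := hclopen.connectedComponent_subset (hpm i) h1
        exact Set.disjoint_left.mp (hdisj hne) h2 (hpm j)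
      exact le_enatCard_of_injective _ hinj
  rw [main]
  refine MeasurableSet.iUnion fun f => MeasurableSet.iUnion fun _ => ?_
  refine (MeasurableSet.iInter fun i => measurableSet_image_UU hc D (f i)).inter ?_
  refine MeasurableSet.compl ?_
  have hopen : IsOpen (⋃ i, UU D (f i)) := isOpen_iUnion fun i => isOpen_UU D (f i)
  exact ((hopen.isClosed_compl.isCompact).image hc).isClosed.measurableSet

lemma enn_repr (m : ℕ∞) :
    (m : ℝ≥0∞) = ∑' k : ℕ, (if ((k + 1 : ℕ) : ℕ∞) ≤ m then (1 : ℝ≥0∞) else 0) := by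
  cases m using ENat.recTopCoe with
  | top =>
      simp only [le_top, if_true]
      rw [ENat.toENNReal_top]
      exact (ENNReal.tsum_const_eq_top_of_ne_zero one_ne_zero).symm
  | coe kk =>
      rw [ENat.toENNReal_coe]
      rw [tsum_eq_sum (s := Finset.range kk) (f := fun k : ℕ =>
        (if ((k + 1 : ℕ) : ℕ∞) ≤ (kk : ℕ∞) then (1 : ℝ≥0∞) else 0)) ?_]
      · rw [Finset.sum_congr rfl (fun j hj => if_pos
          (ENat.coe_le_coe.mpr (Nat.succ_le_of_lt (Finset.mem_range.mp hj))))]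
        rw [Finset.sum_const, Finset.card_range, nsmul_eq_mul, mul_one]
      · intro j hj
        have hnot : ¬ ((j + 1 : ℕ) : ℕ∞) ≤ (kk : ℕ∞) := by
          intro hle
          have h1 : j + 1 ≤ kk := ENat.coe_le_coe.mp hle
          exact hj (Finset.mem_range.mpr (by omega))
        simp only [hnot, if_false]

theorem measurable_fiberCount (h : X → ℂ) (hc : Continuous h) :
    Measurable fun x : ℂ => ((ENat.card (ConnectedComponents ↥(h ⁻¹' {x})) : ℕ∞) : ℝ≥0∞) := by
  have hrepr : (fun x : ℂ => ((ENat.card (ConnectedComponents ↥(h ⁻¹' {x})) : ℕ∞) : ℝ≥0∞)) =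
      fun x => ∑' k : ℕ, Set.indicator
        {y : ℂ | ((k + 1 : ℕ) : ℕ∞) ≤ ENat.card (ConnectedComponents ↥(h ⁻¹' {y}))}
        (fun _ => (1 : ℝ≥0∞)) x := by
    funext x
    rw [enn_repr]
    refine tsum_congr fun k => ?_
    rw [Set.indicator_apply]
    exact if_congr Iff.rfl rfl rfl
  rw [hrepr]
  exact Measurable.ennreal_tsum fun k =>
    measurable_const.indicator (measurableSet_le_card h hc (k + 1) k.succ_pos)

end Meas

end StmtAux

/-- Subadditivity of the minimum nullhomotopy area under concatenation of loops, when the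
first loop has Lebesgue-null range. -/
theorem stmt_16 (p₀ : ℂ) (γ₁ γ₂ : Path p₀ p₀) (hnull : volume (Set.range γ₁) = 0) :
    minHomArea (γ₁.trans γ₂) (Path.refl p₀) ≤
      minHomArea γ₁ (Path.refl p₀) + minHomArea γ₂ (Path.refl p₀) := by
  have key : ∀ (H₁ : Path.Homotopy γ₁ (Path.refl p₀)) (H₂ : Path.Homotopy γ₂ (Path.refl p₀)),
      minHomArea (γ₁.trans γ₂) (Path.refl p₀) ≤ homArea H₁ + homArea H₂ := by
    intro H₁ H₂
    have hmeas : Measurable fun x : ℂ => ((homE H₁ x : ℕ∞) : ℝ≥0∞) :=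
      StmtAux.measurable_fiberCount ⇑H₁ (map_continuous H₁)
    calc minHomArea (γ₁.trans γ₂) (Path.refl p₀)
        ≤ homArea (StmtAux.glue H₁ H₂) := iInf_le _ _
      _ ≤ homArea H₁ + homArea H₂ := by
          rw [homArea, homArea, homArea]
          rw [← lintegral_add_left hmeas]
          refine lintegral_mono fun x => ?_
          rw [← ENat.toENNReal_add]
          exact ENat.toENNReal_le.mpr (StmtAux.homE_glue_le H₁ H₂ x)
  have h2 : minHomArea (γ₁.trans γ₂) (Path.refl p₀) ≤
      ⨅ (H₁ : Path.Homotopy γ₁ (Path.refl p₀)) (H₂ : Path.Homotopy γ₂ (Path.refl p₀)),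
        (homArea H₁ + homArea H₂) :=
    le_iInf fun H₁ => le_iInf fun H₂ => key H₁ H₂
  refine h2.trans ?_
  have h3 : minHomArea γ₁ (Path.refl p₀) + minHomArea γ₂ (Path.refl p₀) =
      ⨅ (H₁ : Path.Homotopy γ₁ (Path.refl p₀)) (H₂ : Path.Homotopy γ₂ (Path.refl p₀)),
        (homArea H₁ + homArea H₂) := by
    unfold minHomArea
    rw [ENNReal.iInf_add]
    exact iInf_congr fun H₁ => ENNReal.add_iInf
  exact h3.ge
end
end
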